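/- arXiv:0802.2344 — 7 statements merged into one kernel-verified Lean document; each statement's English description precedes it below -/
import Mathlib

section
/- Let U ⊆ ℝ² be a connected open set, let (E,F,G) be a metric g on U with Christoffel symbols Γ^i_{jk}, and let K₀,K₁,K₂,K₃ : U → ℝ be arbitrary smooth functions. Define a₁₁ = E·(EG−F²)^{−2/3}, a₁₂ = F·(EG−F²)^{−2/3}, a₂₂ = G·(EG−F²)^{−2/3}. Then the triple (a₁₁,a₁₂,a₂₂) satisfies the linear system (12) with coefficients K₀,…,K₃ if and only if K₀ = −Γ²₁₁, K₁ = Γ¹₁₁ − 2Γ²₁₂, K₂ = −Γ²₂₂ + 2Γ¹₁₂ and K₃ = Γ¹₂₂ on U, i.e. if and only if K₀,…,K₃ are the projective connection coefficients of g. -/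
noncomputable section

/-- The partial derivative of `f : ℝ² → ℝ` in the `i`-th coordinate direction
(`0 ↦ x`, `1 ↦ y`). -/
def pd (i : Fin 2) (f : ℝ × ℝ → ℝ) (p : ℝ × ℝ) : ℝ :=
  fderiv ℝ f p (if i = 0 then ((1 : ℝ), (0 : ℝ)) else ((0 : ℝ), (1 : ℝ)))

/-- The components of the metric `g = E dx² + 2F dx dy + G dy²`. -/
def gc (E F G : ℝ × ℝ → ℝ) (i j : Fin 2) : ℝ × ℝ → ℝ := fun p =>
  if i = 0 then (if j = 0 then E p else F p) else (if j = 0 then F p else G p)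

/-- The components of the inverse metric. -/
def gInv (E F G : ℝ × ℝ → ℝ) (i j : Fin 2) : ℝ × ℝ → ℝ := fun p =>
  (if i = 0 then (if j = 0 then G p else -F p) else (if j = 0 then -F p else E p)) /
    (E p * G p - F p ^ 2)

/-- The Christoffel symbols `Γ^i_{jk}` of the metric `(E,F,G)`. -/
def Chr (E F G : ℝ × ℝ → ℝ) (i j k : Fin 2) : ℝ × ℝ → ℝ := fun p =>
  (1 / 2) * ∑ m : Fin 2, gInv E F G i m p *
    (pd j (gc E F G m k) p + pd k (gc E F G m j) p - pd m (gc E F G j k) p)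

/-- The projective connection coefficient `K₀ = -Γ²₁₁`. -/
def pK0 (E F G : ℝ × ℝ → ℝ) : ℝ × ℝ → ℝ := fun p => - Chr E F G 1 0 0 p
/-- The projective connection coefficient `K₁ = Γ¹₁₁ - 2Γ²₁₂`. -/
def pK1 (E F G : ℝ × ℝ → ℝ) : ℝ × ℝ → ℝ := fun p => Chr E F G 0 0 0 p - 2 * Chr E F G 1 0 1 p
/-- The projective connection coefficient `K₂ = -Γ²₂₂ + 2Γ¹₁₂`. -/
def pK2 (E F G : ℝ × ℝ → ℝ) : ℝ × ℝ → ℝ := fun p => - Chr E F G 1 1 1 p + 2 * Chr E F G 0 0 1 p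
/-- The projective connection coefficient `K₃ = Γ¹₂₂`. -/
def pK3 (E F G : ℝ × ℝ → ℝ) : ℝ × ℝ → ℝ := fun p => Chr E F G 0 1 1 p

/-- The linear system (12). -/
def Sys12 (K₀ K₁ K₂ K₃ a11 a12 a22 : ℝ × ℝ → ℝ) (U : Set (ℝ × ℝ)) : Prop :=
  ∀ p ∈ U,
    pd 0 a11 p - (2/3) * K₁ p * a11 p + 2 * K₀ p * a12 p = 0 ∧
    pd 1 a11 p + 2 * pd 0 a12 p - (4/3) * K₂ p * a11 p + (2/3) * K₁ p * a12 p
      + 2 * K₀ p * a22 p = 0 ∧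
    2 * pd 1 a12 p + pd 0 a22 p - 2 * K₃ p * a11 p - (2/3) * K₂ p * a12 p
      + (4/3) * K₁ p * a22 p = 0 ∧
    pd 1 a22 p - 2 * K₃ p * a12 p + (2/3) * K₂ p * a22 p = 0

/-- The components of a vector field `v = (v¹, v²)`. -/
def vc (v1 v2 : ℝ × ℝ → ℝ) (m : Fin 2) : ℝ × ℝ → ℝ := fun p => if m = 0 then v1 p else v2 p

/-- `v = (v1, v2)` is a Killing vector field for the metric `(E,F,G)` on `U`. -/
def IsKilling (E F G v1 v2 : ℝ × ℝ → ℝ) (U : Set (ℝ × ℝ)) : Prop :=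
  ∀ p ∈ U, ∀ i j : Fin 2,
    (∑ m : Fin 2, (vc v1 v2 m p * pd m (gc E F G i j) p
      + gc E F G m j p * pd i (vc v1 v2 m) p
      + gc E F G i m p * pd j (vc v1 v2 m) p)) = 0

lemma pd_scaled (i : Fin 2) (f E F G a : ℝ × ℝ → ℝ) (p : ℝ × ℝ)
    (hf : DifferentiableAt ℝ f p) (hE : DifferentiableAt ℝ E p)
    (hF : DifferentiableAt ℝ F p) (hG : DifferentiableAt ℝ G p)
    (hD : E p * G p - F p ^ 2 ≠ 0)
    (ha : a =ᶠ[nhds p] fun q => f q * (((E q * G q - F q ^ 2) ^ 2) ^ ((1:ℝ)/3))⁻¹) :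
    pd i a p = (pd i f p
        - (2/3) * (pd i (fun q => E q * G q - F q ^ 2) p / (E p * G p - F p ^ 2)) * f p)
      * (((E p * G p - F p ^ 2) ^ 2) ^ ((1:ℝ)/3))⁻¹ := by
  have hd : DifferentiableAt ℝ (fun q => E q * G q - F q ^ 2) p :=
    (hE.mul hG).sub (hF.pow 2)
  have hdF : HasFDerivAt (fun q => E q * G q - F q ^ 2)
      (fderiv ℝ (fun q => E q * G q - F q ^ 2) p) p := hd.hasFDerivAt
  have hu : (0:ℝ) < (E p * G p - F p ^ 2) ^ 2 := by positivity
  have hsq : HasFDerivAt (fun q => (E q * G q - F q ^ 2) ^ 2)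
      (((2:ℕ) * (E p * G p - F p ^ 2) ^ (2-1) : ℝ) •
        fderiv ℝ (fun q => E q * G q - F q ^ 2) p) p :=
    by have := (hasDerivAt_pow 2 (E p * G p - F p ^ 2)).comp_hasFDerivAt p hdF; exact this
  have h4 := hsq.rpow_const (p := -((1:ℝ)/3)) (Or.inl hu.ne')
  have h5 := hf.hasFDerivAt.mul h4
  have ha' : a =ᶠ[nhds p] fun q => f q * ((E q * G q - F q ^ 2) ^ 2) ^ (-((1:ℝ)/3)) :=
    ha.trans (Filter.Eventually.of_forall fun q => by
      beta_reduce
      rw [Real.rpow_neg (sq_nonneg _)])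
  unfold pd
  rw [ha'.fderiv_eq, HasFDerivAt.fderiv (f := fun q => f q * ((E q * G q - F q ^ 2) ^ 2) ^ (-((1:ℝ)/3))) h5]
  simp only [ContinuousLinearMap.add_apply, ContinuousLinearMap.coe_smul', Pi.smul_apply,
    smul_eq_mul]
  rw [Real.rpow_sub hu, Real.rpow_one, Real.rpow_neg hu.le]
  field_simp
  ring

lemma pd_det (i : Fin 2) (E F G : ℝ × ℝ → ℝ) (p : ℝ × ℝ)
    (hE : DifferentiableAt ℝ E p) (hF : DifferentiableAt ℝ F p)
    (hG : DifferentiableAt ℝ G p) :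
    pd i (fun q => E q * G q - F q ^ 2) p
      = pd i E p * G p + E p * pd i G p - 2 * F p * pd i F p := by
  have hsq : HasFDerivAt (fun q => F q ^ 2)
      (((2:ℕ) * F p ^ (2-1) : ℝ) • fderiv ℝ F p) p :=
    (hasDerivAt_pow 2 (F p)).comp_hasFDerivAt p hF.hasFDerivAt
  have h := (hE.hasFDerivAt.mul hG.hasFDerivAt).sub hsq
  unfold pd
  rw [HasFDerivAt.fderiv (f := fun q => E q * G q - F q ^ 2) h]
  simp only [ContinuousLinearMap.coe_sub', Pi.sub_apply, ContinuousLinearMap.add_apply,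
    ContinuousLinearMap.coe_smul', Pi.smul_apply, smul_eq_mul]
  ring

lemma pK_eval (E F G : ℝ × ℝ → ℝ) (p : ℝ × ℝ) (hD : E p * G p - F p ^ 2 ≠ 0) :
    pK0 E F G p = (F p * pd 0 E p - 2 * E p * pd 0 F p + E p * pd 1 E p)
        / (2 * (E p * G p - F p ^ 2)) ∧
    pK1 E F G p = (G p * pd 0 E p - 2 * F p * pd 0 F p + 3 * F p * pd 1 E p
        - 2 * E p * pd 0 G p) / (2 * (E p * G p - F p ^ 2)) ∧
    pK2 E F G p = (2 * G p * pd 1 E p + 2 * F p * pd 1 F p - 3 * F p * pd 0 G p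
        - E p * pd 1 G p) / (2 * (E p * G p - F p ^ 2)) ∧
    pK3 E F G p = (2 * G p * pd 1 F p - G p * pd 0 G p - F p * pd 1 G p)
        / (2 * (E p * G p - F p ^ 2)) := by
  have e00 : gc E F G 0 0 = E := rfl
  have e01 : gc E F G 0 1 = F := rfl
  have e10 : gc E F G 1 0 = F := rfl
  have e11 : gc E F G 1 1 = G := rfl
  have i00 : gInv E F G 0 0 = fun p => G p / (E p * G p - F p ^ 2) := rfl
  have i01 : gInv E F G 0 1 = fun p => -F p / (E p * G p - F p ^ 2) := rfl
  have i10 : gInv E F G 1 0 = fun p => -F p / (E p * G p - F p ^ 2) := rfl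
  have i11 : gInv E F G 1 1 = fun p => E p / (E p * G p - F p ^ 2) := rfl
  refine ⟨?_, ?_, ?_, ?_⟩ <;>
    simp only [pK0, pK1, pK2, pK3, Chr, Fin.sum_univ_two, e00, e01, e10, e11,
      i00, i01, i10, i11] <;>
    field_simp <;> ring

set_option maxHeartbeats 2000000 in
lemma algIff (E F G Ex Ey Fx Fy Gx Gy K0 K1 K2 K3 w D Dx Dy : ℝ)
    (hDdef : D = E * G - F ^ 2)
    (hDx : Dx = Ex * G + E * Gx - 2 * F * Fx)
    (hDy : Dy = Ey * G + E * Gy - 2 * F * Fy)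
    (hD : D ≠ 0) (hw : w ≠ 0) :
    ((Ex - 2 / 3 * (Dx / D) * E) * w - 2 / 3 * K1 * (E * w) + 2 * K0 * (F * w) = 0 ∧
     (Ey - 2 / 3 * (Dy / D) * E) * w + 2 * ((Fx - 2 / 3 * (Dx / D) * F) * w)
       - 4 / 3 * K2 * (E * w) + 2 / 3 * K1 * (F * w) + 2 * K0 * (G * w) = 0 ∧
     2 * ((Fy - 2 / 3 * (Dy / D) * F) * w) + (Gx - 2 / 3 * (Dx / D) * G) * w
       - 2 * K3 * (E * w) - 2 / 3 * K2 * (F * w) + 4 / 3 * K1 * (G * w) = 0 ∧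
     (Gy - 2 / 3 * (Dy / D) * G) * w - 2 * K3 * (F * w) + 2 / 3 * K2 * (G * w) = 0)
    ↔ (K0 = (F * Ex - 2 * E * Fx + E * Ey) / (2 * D) ∧
       K1 = (G * Ex - 2 * F * Fx + 3 * F * Ey - 2 * E * Gx) / (2 * D) ∧
       K2 = (2 * G * Ey + 2 * F * Fy - 3 * F * Gx - E * Gy) / (2 * D) ∧
       K3 = (2 * G * Fy - G * Gx - F * Gy) / (2 * D)) := by
  subst hDdef hDx hDy
  set D := E * G - F ^ 2 with hDdef
  have h3D : (3:ℝ) * D ≠ 0 := by positivity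
  have h2D : (2:ℝ) * D ≠ 0 := by positivity
  have h9D : (9:ℝ) * D ^ 2 ≠ 0 := by positivity
  set Dx := Ex * G + E * Gx - 2 * F * Fx with hDx
  set Dy := Ey * G + E * Gy - 2 * F * Fy with hDy
  have t1 : ((Ex - 2 / 3 * (Dx / D) * E) * w - 2 / 3 * K1 * (E * w) + 2 * K0 * (F * w) = 0)
      ↔ 3 * D * Ex - 2 * Dx * E - 2 * K1 * E * D + 6 * K0 * F * D = 0 := by
    rw [show (Ex - 2 / 3 * (Dx / D) * E) * w - 2 / 3 * K1 * (E * w) + 2 * K0 * (F * w)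
        = (3 * D * Ex - 2 * Dx * E - 2 * K1 * E * D + 6 * K0 * F * D) * w / (3 * D) by
          field_simp; ring,
      div_eq_zero_iff, mul_eq_zero]
    simp [hw, h3D]
  have t2 : ((Ey - 2 / 3 * (Dy / D) * E) * w + 2 * ((Fx - 2 / 3 * (Dx / D) * F) * w)
        - 4 / 3 * K2 * (E * w) + 2 / 3 * K1 * (F * w) + 2 * K0 * (G * w) = 0)
      ↔ 3 * D * Ey - 2 * Dy * E + 6 * D * Fx - 4 * Dx * F - 4 * K2 * E * D + 2 * K1 * F * D
          + 6 * K0 * G * D = 0 := by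
    rw [show (Ey - 2 / 3 * (Dy / D) * E) * w + 2 * ((Fx - 2 / 3 * (Dx / D) * F) * w)
          - 4 / 3 * K2 * (E * w) + 2 / 3 * K1 * (F * w) + 2 * K0 * (G * w)
        = (3 * D * Ey - 2 * Dy * E + 6 * D * Fx - 4 * Dx * F - 4 * K2 * E * D + 2 * K1 * F * D
          + 6 * K0 * G * D) * w / (3 * D) by field_simp; ring,
      div_eq_zero_iff, mul_eq_zero]
    simp [hw, h3D]
  have t3 : (2 * ((Fy - 2 / 3 * (Dy / D) * F) * w) + (Gx - 2 / 3 * (Dx / D) * G) * w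
        - 2 * K3 * (E * w) - 2 / 3 * K2 * (F * w) + 4 / 3 * K1 * (G * w) = 0)
      ↔ 6 * D * Fy - 4 * Dy * F + 3 * D * Gx - 2 * Dx * G - 6 * K3 * E * D - 2 * K2 * F * D
          + 4 * K1 * G * D = 0 := by
    rw [show 2 * ((Fy - 2 / 3 * (Dy / D) * F) * w) + (Gx - 2 / 3 * (Dx / D) * G) * w
          - 2 * K3 * (E * w) - 2 / 3 * K2 * (F * w) + 4 / 3 * K1 * (G * w)
        = (6 * D * Fy - 4 * Dy * F + 3 * D * Gx - 2 * Dx * G - 6 * K3 * E * D - 2 * K2 * F * D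
          + 4 * K1 * G * D) * w / (3 * D) by field_simp; ring,
      div_eq_zero_iff, mul_eq_zero]
    simp [hw, h3D]
  have t4 : ((Gy - 2 / 3 * (Dy / D) * G) * w - 2 * K3 * (F * w) + 2 / 3 * K2 * (G * w) = 0)
      ↔ 3 * D * Gy - 2 * Dy * G - 6 * K3 * F * D + 2 * K2 * G * D = 0 := by
    rw [show (Gy - 2 / 3 * (Dy / D) * G) * w - 2 * K3 * (F * w) + 2 / 3 * K2 * (G * w)
        = (3 * D * Gy - 2 * Dy * G - 6 * K3 * F * D + 2 * K2 * G * D) * w / (3 * D) by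
          field_simp; ring,
      div_eq_zero_iff, mul_eq_zero]
    simp [hw, h3D]
  rw [t1, t2, t3, t4]
  rw [hDdef, hDx, hDy]
  constructor
  · rintro ⟨h1, h2, h3, h4⟩
    refine ⟨?_, ?_, ?_, ?_⟩ <;> rw [eq_div_iff (by rw [hDdef] at h2D; exact h2D)]
    · refine mul_left_cancel₀ (by rw [hDdef] at h9D; exact h9D) ?_
      linear_combination (3*F^3 - 9*E*F*G) * h1 + (3*E*F^2 + 3*E^2*G) * h2
        + (-6*E^2*F) * h3 + (6*E^3) * h4
    · refine mul_left_cancel₀ (by rw [hDdef] at h9D; exact h9D) ?_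
      linear_combination (-9*G*F^2 - 9*E*G^2) * h1 + (9*F^3 + 9*E*F*G) * h2
        + (-18*E*F^2) * h3 + (18*E^2*F) * h4
    · refine mul_left_cancel₀ (by rw [hDdef] at h9D; exact h9D) ?_
      linear_combination (-18*F*G^2) * h1 + (18*F^2*G) * h2
        + (-9*F^3 - 9*E*F*G) * h3 + (9*E*F^2 + 9*E^2*G) * h4
    · refine mul_left_cancel₀ (by rw [hDdef] at h9D; exact h9D) ?_
      linear_combination (-6*G^3) * h1 + (6*F*G^2) * h2
        + (-(3*F^2*G + 3*E*G^2)) * h3 + (-3*F^3 + 9*E*F*G) * h4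
  · rintro ⟨hk0, hk1, hk2, hk3⟩
    subst hk0 hk1 hk2 hk3
    have hD' : E * G - F ^ 2 ≠ 0 := by rw [hDdef] at hD; exact hD
    refine ⟨?_, ?_, ?_, ?_⟩ <;> field_simp <;> ring

/-- For a metric `(E,F,G)` on a connected open set `U ⊆ ℝ²` and arbitrary
smooth functions `K₀,…,K₃`, the triple `a_{ij} = g_{ij}·(det g)^{-2/3}` satisfies the linear
system (12) with coefficients `K₀,…,K₃` if and only if `K₀,…,K₃` are the projective
connection coefficients of `g`. -/
theorem stmt0
    (U : Set (ℝ × ℝ)) (hUopen : IsOpen U) (hUconn : IsConnected U)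
    (E F G : ℝ × ℝ → ℝ)
    (hE : ContDiffOn ℝ (⊤ : ℕ∞) E U) (hF : ContDiffOn ℝ (⊤ : ℕ∞) F U) (hG : ContDiffOn ℝ (⊤ : ℕ∞) G U)
    (hdet : ∀ p ∈ U, E p * G p - F p ^ 2 ≠ 0)
    (K₀ K₁ K₂ K₃ : ℝ × ℝ → ℝ)
    (hK₀ : ContDiffOn ℝ (⊤ : ℕ∞) K₀ U) (hK₁ : ContDiffOn ℝ (⊤ : ℕ∞) K₁ U)
    (hK₂ : ContDiffOn ℝ (⊤ : ℕ∞) K₂ U) (hK₃ : ContDiffOn ℝ (⊤ : ℕ∞) K₃ U)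
    (a11 a12 a22 : ℝ × ℝ → ℝ)
    (ha11 : ∀ p ∈ U, a11 p = E p * (((E p * G p - F p ^ 2) ^ 2) ^ ((1:ℝ)/3))⁻¹)
    (ha12 : ∀ p ∈ U, a12 p = F p * (((E p * G p - F p ^ 2) ^ 2) ^ ((1:ℝ)/3))⁻¹)
    (ha22 : ∀ p ∈ U, a22 p = G p * (((E p * G p - F p ^ 2) ^ 2) ^ ((1:ℝ)/3))⁻¹) :
    Sys12 K₀ K₁ K₂ K₃ a11 a12 a22 U ↔
      ∀ p ∈ U, K₀ p = pK0 E F G p ∧ K₁ p = pK1 E F G p ∧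
        K₂ p = pK2 E F G p ∧ K₃ p = pK3 E F G p := by
  
  unfold Sys12
  refine forall₂_congr fun p hp => ?_
  have hpU : U ∈ nhds p := hUopen.mem_nhds hp
  have hEd : DifferentiableAt ℝ E p := (hE.differentiableOn (by simp)).differentiableAt hpU
  have hFd : DifferentiableAt ℝ F p := (hF.differentiableOn (by simp)).differentiableAt hpU
  have hGd : DifferentiableAt ℝ G p := (hG.differentiableOn (by simp)).differentiableAt hpU
  have hD := hdet p hp
  have hu : (0:ℝ) < (E p * G p - F p ^ 2) ^ 2 := by positivity
  have hw : (((E p * G p - F p ^ 2) ^ 2) ^ ((1:ℝ)/3))⁻¹ ≠ 0 :=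
    inv_ne_zero (Real.rpow_pos_of_pos hu _).ne'
  have ea11 : a11 =ᶠ[nhds p] fun q => E q * (((E q * G q - F q ^ 2) ^ 2) ^ ((1:ℝ)/3))⁻¹ :=
    Filter.eventuallyEq_of_mem hpU ha11
  have ea12 : a12 =ᶠ[nhds p] fun q => F q * (((E q * G q - F q ^ 2) ^ 2) ^ ((1:ℝ)/3))⁻¹ :=
    Filter.eventuallyEq_of_mem hpU ha12
  have ea22 : a22 =ᶠ[nhds p] fun q => G q * (((E q * G q - F q ^ 2) ^ 2) ^ ((1:ℝ)/3))⁻¹ :=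
    Filter.eventuallyEq_of_mem hpU ha22
  have p11 := fun i => pd_scaled i E E F G a11 p hEd hEd hFd hGd hD ea11
  have p12 := fun i => pd_scaled i F E F G a12 p hFd hEd hFd hGd hD ea12
  have p22 := fun i => pd_scaled i G E F G a22 p hGd hEd hFd hGd hD ea22
  obtain ⟨q0, q1, q2, q3⟩ := pK_eval E F G p hD
  rw [ha11 p hp, ha12 p hp, ha22 p hp, p11 0, p11 1, p12 0, p12 1, p22 0, p22 1,
    q0, q1, q2, q3]
  exact algIff (E p) (F p) (G p) (pd 0 E p) (pd 1 E p) (pd 0 F p) (pd 1 F p) (pd 0 G p)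
    (pd 1 G p) (K₀ p) (K₁ p) (K₂ p) (K₃ p) _ _ _ _ rfl
    (pd_det 0 E F G p hEd hFd hGd) (pd_det 1 E F G p hEd hFd hGd) hD hw
end
end

section
/- Let U ⊆ ℝ² be a convex open set and let f, b : U → ℝ be smooth with f everywhere positive. Then f and b satisfy the system ∂_y(f·b) + 2·∂_x f = 0 and ∂_x(f·b) + 2·∂_y f = 0 on U if and only if there exist smooth one-variable functions X (defined on {x+y : (x,y) ∈ U}) and Y (defined on {x−y : (x,y) ∈ U}) such that f(x,y)b(x,y) + 2f(x,y) = Y(x−y) and f(x,y)b(x,y) − 2f(x,y) = X(x+y) for all (x,y) ∈ U. In that case f(x,y) = (Y(x−y) − X(x+y))/4 and b(x,y) = 2·(X(x+y)+Y(x−y))/(Y(x−y)−X(x+y)). -/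
noncomputable section

lemma myIsOpen_sumSet (U : Set (ℝ × ℝ)) (hU : IsOpen U) (c : ℝ) :
    IsOpen {t | ∃ p ∈ U, t = p.1 + c * p.2} := by
  rw [Metric.isOpen_iff]
  rintro t ⟨p, hp, rfl⟩
  obtain ⟨ε, hε, hball⟩ := Metric.isOpen_iff.mp hU p hp
  refine ⟨ε, hε, fun r hr => ?_⟩
  refine ⟨(p.1 + (r - (p.1 + c * p.2)), p.2), hball ?_, by ring⟩
  simp only [Metric.mem_ball, Prod.dist_eq, Real.dist_eq] at hr ⊢
  have : |p.1 + (r - (p.1 + c * p.2)) - p.1| = |r - (p.1 + c * p.2)| := by ring_nf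
  simp only [sub_self, abs_zero]
  rw [this]
  simp [hr, hε]

lemma const_along {U : Set (ℝ × ℝ)} (hUopen : IsOpen U) (hUconv : Convex ℝ U)
    {u : ℝ × ℝ → ℝ} {e : ℝ × ℝ}
    (hu : ∀ p ∈ U, DifferentiableAt ℝ u p)
    (hder : ∀ p ∈ U, fderiv ℝ u p e = 0)
    {p q : ℝ × ℝ} (hp : p ∈ U) (hq : q ∈ U) {r : ℝ} (hpq : q = p + r • e) :
    u p = u q := by
  set g : ℝ → ℝ × ℝ := fun t => p + t • e with hg
  set J : Set ℝ := g ⁻¹' U with hJ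
  have hgc : Continuous g := by fun_prop
  have hJo : IsOpen J := hUopen.preimage hgc
  have hJc : Convex ℝ J := by
    intro a ha b hb s1 s2 hs1 hs2 hsum
    have key : g (s1 * a + s2 * b) = s1 • g a + s2 • g b := by
      simp only [hg]
      rw [show s1 = 1 - s2 by linarith]
      module
    show g (s1 • a + s2 • b) ∈ U
    rw [smul_eq_mul, smul_eq_mul, key]
    exact hUconv ha hb hs1 hs2 hsum
  have hcomp : ∀ t ∈ J, HasDerivAt (u ∘ g) 0 t := by
    intro t ht
    have hgt : HasDerivAt g e t := by
      have := ((hasDerivAt_id' t).smul_const e).const_add p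
      rw [one_smul] at this
      exact this
    have := (hu (g t) ht).hasFDerivAt.comp_hasDerivAt t hgt
    rwa [hder (g t) ht] at this
  have h0 : (0 : ℝ) ∈ J := by simp [hJ, hg, hp]
  have hr : r ∈ J := by
    simp only [hJ, hg, Set.mem_preimage]
    rw [← hpq]; exact hq
  have := hJc.is_const_of_fderivWithin_eq_zero (f := u ∘ g)
    (fun t ht => ((hcomp t ht).differentiableAt).differentiableWithinAt)
    (fun t ht => by
      rw [fderivWithin_of_isOpen hJo ht]
      have h0' : HasFDerivAt (u ∘ g) (0 : ℝ →L[ℝ] ℝ) t := by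
        have := (hcomp t ht).hasFDerivAt
        rw [ContinuousLinearMap.toSpanSingleton_zero] at this
        exact this
      exact h0'.fderiv) h0 hr
  simpa [hg, ← hpq] using this

/-- the Liouville case. On a convex open set `U`, the system
`∂_y(fb) + 2∂_x f = 0`, `∂_x(fb) + 2∂_y f = 0` holds iff `fb + 2f = Y(x−y)` and
`fb − 2f = X(x+y)` for smooth one-variable functions `X`, `Y`; in that case
`f = (Y−X)/4` and `b = 2(X+Y)/(Y−X)`. -/
theorem stmt6
    (U : Set (ℝ × ℝ)) (hUopen : IsOpen U) (hUconv : Convex ℝ U)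
    (f b : ℝ × ℝ → ℝ)
    (hf : ContDiffOn ℝ (⊤ : ℕ∞) f U) (hb : ContDiffOn ℝ (⊤ : ℕ∞) b U)
    (hfpos : ∀ p ∈ U, 0 < f p) :
    ((∀ p ∈ U,
        pd 1 (fun q => f q * b q) p + 2 * pd 0 f p = 0 ∧
        pd 0 (fun q => f q * b q) p + 2 * pd 1 f p = 0) ↔
      (∃ X Y : ℝ → ℝ,
        ContDiffOn ℝ (⊤ : ℕ∞) X {t | ∃ p ∈ U, t = p.1 + p.2} ∧
        ContDiffOn ℝ (⊤ : ℕ∞) Y {t | ∃ p ∈ U, t = p.1 - p.2} ∧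
        ∀ p ∈ U, f p * b p + 2 * f p = Y (p.1 - p.2) ∧
          f p * b p - 2 * f p = X (p.1 + p.2))) ∧
    (∀ X Y : ℝ → ℝ,
      (∀ p ∈ U, f p * b p + 2 * f p = Y (p.1 - p.2) ∧
        f p * b p - 2 * f p = X (p.1 + p.2)) →
      ∀ p ∈ U, f p = (Y (p.1 - p.2) - X (p.1 + p.2)) / 4 ∧
        b p = 2 * (X (p.1 + p.2) + Y (p.1 - p.2)) / (Y (p.1 - p.2) - X (p.1 + p.2))) := by
  classical
  have hSopen : IsOpen {t | ∃ p ∈ U, t = p.1 + p.2} := by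
    have := myIsOpen_sumSet U hUopen 1
    simpa using this
  have hDopen : IsOpen {t | ∃ p ∈ U, t = p.1 - p.2} := by
    have := myIsOpen_sumSet U hUopen (-1)
    convert this using 2 with t
    simp [sub_eq_add_neg, neg_one_mul]
  have dF : ∀ p ∈ U, DifferentiableAt ℝ f p := fun p hp =>
    (hf.contDiffAt (hUopen.mem_nhds hp)).differentiableAt (by simp)
  have dB : ∀ p ∈ U, DifferentiableAt ℝ b p := fun p hp =>
    (hb.contDiffAt (hUopen.mem_nhds hp)).differentiableAt (by simp)
  have dFB : ∀ p ∈ U, DifferentiableAt ℝ (fun q => f q * b q) p := fun p hp =>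
    (dF p hp).mul (dB p hp)
  constructor
  · constructor
    · -- hard direction
      intro H
      set u : ℝ × ℝ → ℝ := fun q => f q * b q + 2 * f q with hu_def
      set v : ℝ × ℝ → ℝ := fun q => f q * b q - 2 * f q with hv_def
      have huC : ContDiffOn ℝ (⊤ : ℕ∞) u U := (hf.mul hb).add (contDiffOn_const.mul hf)
      have hvC : ContDiffOn ℝ (⊤ : ℕ∞) v U := (hf.mul hb).sub (contDiffOn_const.mul hf)
      have hud : ∀ p ∈ U, DifferentiableAt ℝ u p := fun p hp =>
        (dFB p hp).add ((dF p hp).const_mul 2)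
      have hvd : ∀ p ∈ U, DifferentiableAt ℝ v p := fun p hp =>
        (dFB p hp).sub ((dF p hp).const_mul 2)
      have hueq : ∀ p ∈ U, fderiv ℝ u p ((1 : ℝ), (1 : ℝ)) = 0 := by
        intro p hp
        have h1 := (H p hp).1
        have h2 := (H p hp).2
        simp only [pd, show (1 : Fin 2) ≠ 0 by decide, if_neg, ite_true, ite_false,
          reduceIte] at h1 h2
        have hF : HasFDerivAt u (fderiv ℝ (fun q => f q * b q) p + (2:ℝ) • fderiv ℝ f p) p := by
          have := (dFB p hp).hasFDerivAt.add ((dF p hp).hasFDerivAt.const_mul 2)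
          exact this
        rw [hF.fderiv]
        have e11 : ((1 : ℝ), (1 : ℝ)) = ((1 : ℝ), (0 : ℝ)) + ((0 : ℝ), (1 : ℝ)) := by
          simp [Prod.ext_iff]
        rw [e11]
        simp only [ContinuousLinearMap.add_apply, ContinuousLinearMap.smul_apply, map_add,
          smul_eq_mul]
        linarith
      have hveq : ∀ p ∈ U, fderiv ℝ v p ((1 : ℝ), (-1 : ℝ)) = 0 := by
        intro p hp
        have h1 := (H p hp).1
        have h2 := (H p hp).2
        simp only [pd, show (1 : Fin 2) ≠ 0 by decide, if_neg, ite_true, ite_false,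
          reduceIte] at h1 h2
        have hF : HasFDerivAt v (fderiv ℝ (fun q => f q * b q) p - (2:ℝ) • fderiv ℝ f p) p := by
          have := (dFB p hp).hasFDerivAt.sub ((dF p hp).hasFDerivAt.const_mul 2)
          exact this
        rw [hF.fderiv]
        have e11 : ((1 : ℝ), (-1 : ℝ)) = ((1 : ℝ), (0 : ℝ)) - ((0 : ℝ), (1 : ℝ)) := by
          simp [Prod.ext_iff]
        rw [e11]
        simp only [ContinuousLinearMap.sub_apply, ContinuousLinearMap.smul_apply, map_sub,
          smul_eq_mul]
        linarith
      -- define Y and X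
      set Y : ℝ → ℝ := fun t => if h : ∃ p ∈ U, t = p.1 - p.2 then u h.choose else 0 with hY_def
      set X : ℝ → ℝ := fun t => if h : ∃ p ∈ U, t = p.1 + p.2 then v h.choose else 0 with hX_def
      have hYval : ∀ p ∈ U, Y (p.1 - p.2) = u p := by
        intro p hp
        have hex : ∃ q ∈ U, p.1 - p.2 = q.1 - q.2 := ⟨p, hp, rfl⟩
        simp only [hY_def, dif_pos hex]
        obtain ⟨hq1, hq2⟩ := hex.choose_spec
        refine (const_along hUopen hUconv hud hueq hp hq1
          (q := hex.choose) (r := hex.choose.1 - p.1) ?_).symm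
        rw [Prod.ext_iff]
        constructor
        · simp
        · simp only [Prod.snd_add, Prod.smul_snd, smul_eq_mul, mul_one]
          linarith
      have hXval : ∀ p ∈ U, X (p.1 + p.2) = v p := by
        intro p hp
        have hex : ∃ q ∈ U, p.1 + p.2 = q.1 + q.2 := ⟨p, hp, rfl⟩
        simp only [hX_def, dif_pos hex]
        obtain ⟨hq1, hq2⟩ := hex.choose_spec
        refine (const_along hUopen hUconv hvd hveq hp hq1
          (q := hex.choose) (r := hex.choose.1 - p.1) ?_).symm
        rw [Prod.ext_iff]
        constructor
        · simp
        · simp only [Prod.snd_add, Prod.smul_snd, smul_eq_mul, mul_neg, mul_one]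
          linarith
      have hYsm : ContDiffOn ℝ (⊤ : ℕ∞) Y {t | ∃ p ∈ U, t = p.1 - p.2} := by
        rintro t ⟨p, hp, rfl⟩
        apply ContDiffAt.contDiffWithinAt
        set φ : ℝ → ℝ × ℝ := fun s =>
          ((p.1 + (s - (p.1 - p.2)) / 2, p.2 - (s - (p.1 - p.2)) / 2) : ℝ × ℝ) with hφ_def
        have hφC : ContDiff ℝ (⊤ : ℕ∞) φ := by
          apply ContDiff.prodMk <;> fun_prop (disch := norm_num)
        have hφt : φ (p.1 - p.2) = p := by simp [hφ_def]
        have hmem : ∀ᶠ s in nhds (p.1 - p.2), φ s ∈ U := by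
          have : ContinuousAt φ (p.1 - p.2) := hφC.continuous.continuousAt
          have := this.preimage_mem_nhds (by rw [hφt] at *; exact hUopen.mem_nhds hp)
          exact this
        have hEq : Y =ᶠ[nhds (p.1 - p.2)] u ∘ φ := by
          filter_upwards [hmem] with s hs
          have hd : (φ s).1 - (φ s).2 = s := by simp [hφ_def]; ring
          have := hYval (φ s) hs
          rw [hd] at this
          exact this
        refine ContDiffAt.congr_of_eventuallyEq ?_ hEq
        have hcd : ContDiffAt ℝ (⊤ : ℕ∞) u (φ (p.1 - p.2)) := by
          rw [hφt]; exact huC.contDiffAt (hUopen.mem_nhds hp)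
        exact hcd.comp (p.1 - p.2) hφC.contDiffAt
      have hXsm : ContDiffOn ℝ (⊤ : ℕ∞) X {t | ∃ p ∈ U, t = p.1 + p.2} := by
        rintro t ⟨p, hp, rfl⟩
        apply ContDiffAt.contDiffWithinAt
        set φ : ℝ → ℝ × ℝ := fun s =>
          ((p.1 + (s - (p.1 + p.2)) / 2, p.2 + (s - (p.1 + p.2)) / 2) : ℝ × ℝ) with hφ_def
        have hφC : ContDiff ℝ (⊤ : ℕ∞) φ := by
          apply ContDiff.prodMk <;> fun_prop (disch := norm_num)
        have hφt : φ (p.1 + p.2) = p := by simp [hφ_def]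
        have hmem : ∀ᶠ s in nhds (p.1 + p.2), φ s ∈ U := by
          have : ContinuousAt φ (p.1 + p.2) := hφC.continuous.continuousAt
          have := this.preimage_mem_nhds (by rw [hφt] at *; exact hUopen.mem_nhds hp)
          exact this
        have hEq : X =ᶠ[nhds (p.1 + p.2)] v ∘ φ := by
          filter_upwards [hmem] with s hs
          have hd : (φ s).1 + (φ s).2 = s := by simp [hφ_def]; ring
          have := hXval (φ s) hs
          rw [hd] at this
          exact this
        refine ContDiffAt.congr_of_eventuallyEq ?_ hEq
        have hcd : ContDiffAt ℝ (⊤ : ℕ∞) v (φ (p.1 + p.2)) := by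
          rw [hφt]; exact hvC.contDiffAt (hUopen.mem_nhds hp)
        exact hcd.comp (p.1 + p.2) hφC.contDiffAt
      exact ⟨X, Y, hXsm, hYsm, fun p hp => ⟨(hYval p hp).symm, (hXval p hp).symm⟩⟩
    · -- easy direction
      rintro ⟨X, Y, hX, hY, hXY⟩ p hp
      have hXd : DifferentiableAt ℝ X (p.1 + p.2) :=
        ((hX.contDiffAt (hSopen.mem_nhds ⟨p, hp, rfl⟩)).differentiableAt (by simp))
      have hYd : DifferentiableAt ℝ Y (p.1 - p.2) :=
        ((hY.contDiffAt (hDopen.mem_nhds ⟨p, hp, rfl⟩)).differentiableAt (by simp))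
      set X' := deriv X (p.1 + p.2) with hX'
      set Y' := deriv Y (p.1 - p.2) with hY'
      have hsum : HasFDerivAt (fun q : ℝ × ℝ => q.1 + q.2)
          (ContinuousLinearMap.fst ℝ ℝ ℝ + ContinuousLinearMap.snd ℝ ℝ ℝ) p :=
        (hasFDerivAt_fst).add (hasFDerivAt_snd)
      have hdiff : HasFDerivAt (fun q : ℝ × ℝ => q.1 - q.2)
          (ContinuousLinearMap.fst ℝ ℝ ℝ - ContinuousLinearMap.snd ℝ ℝ ℝ) p :=
        (hasFDerivAt_fst).sub (hasFDerivAt_snd)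
      have hXc : HasFDerivAt (fun q : ℝ × ℝ => X (q.1 + q.2))
          (X' • (ContinuousLinearMap.fst ℝ ℝ ℝ + ContinuousLinearMap.snd ℝ ℝ ℝ)) p :=
        hXd.hasDerivAt.comp_hasFDerivAt p hsum
      have hYc : HasFDerivAt (fun q : ℝ × ℝ => Y (q.1 - q.2))
          (Y' • (ContinuousLinearMap.fst ℝ ℝ ℝ - ContinuousLinearMap.snd ℝ ℝ ℝ)) p :=
        hYd.hasDerivAt.comp_hasFDerivAt p hdiff
      -- f agrees with g near p
      have hfg : f =ᶠ[nhds p] fun q => (4 : ℝ)⁻¹ * (Y (q.1 - q.2) - X (q.1 + q.2)) := by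
        filter_upwards [hUopen.mem_nhds hp] with q hq
        have h1 := (hXY q hq).1
        have h2 := (hXY q hq).2
        linarith
      have hfbg : (fun q => f q * b q) =ᶠ[nhds p]
          fun q => (2 : ℝ)⁻¹ * (X (q.1 + q.2) + Y (q.1 - q.2)) := by
        filter_upwards [hUopen.mem_nhds hp] with q hq
        have h1 := (hXY q hq).1
        have h2 := (hXY q hq).2
        linarith
      have hgF : HasFDerivAt (fun q : ℝ × ℝ => (4 : ℝ)⁻¹ * (Y (q.1 - q.2) - X (q.1 + q.2)))
          ((4 : ℝ)⁻¹ • (Y' • (ContinuousLinearMap.fst ℝ ℝ ℝ - ContinuousLinearMap.snd ℝ ℝ ℝ) -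
            X' • (ContinuousLinearMap.fst ℝ ℝ ℝ + ContinuousLinearMap.snd ℝ ℝ ℝ))) p :=
        (hYc.sub hXc).const_mul _
      have hhF : HasFDerivAt (fun q : ℝ × ℝ => (2 : ℝ)⁻¹ * (X (q.1 + q.2) + Y (q.1 - q.2)))
          ((2 : ℝ)⁻¹ • (X' • (ContinuousLinearMap.fst ℝ ℝ ℝ + ContinuousLinearMap.snd ℝ ℝ ℝ) +
            Y' • (ContinuousLinearMap.fst ℝ ℝ ℝ - ContinuousLinearMap.snd ℝ ℝ ℝ))) p :=
        (hXc.add hYc).const_mul _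
      have hfder : fderiv ℝ f p = (4 : ℝ)⁻¹ •
          (Y' • (ContinuousLinearMap.fst ℝ ℝ ℝ - ContinuousLinearMap.snd ℝ ℝ ℝ) -
            X' • (ContinuousLinearMap.fst ℝ ℝ ℝ + ContinuousLinearMap.snd ℝ ℝ ℝ)) := by
        rw [hfg.fderiv_eq, hgF.fderiv]
      have hfbder : fderiv ℝ (fun q => f q * b q) p = (2 : ℝ)⁻¹ •
          (X' • (ContinuousLinearMap.fst ℝ ℝ ℝ + ContinuousLinearMap.snd ℝ ℝ ℝ) +
            Y' • (ContinuousLinearMap.fst ℝ ℝ ℝ - ContinuousLinearMap.snd ℝ ℝ ℝ)) := by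
        rw [hfbg.fderiv_eq, hhF.fderiv]
      constructor
      · simp only [pd, show (1 : Fin 2) ≠ 0 by decide, if_neg, reduceIte]
        rw [hfbder, hfder]
        simp
        ring
      · simp only [pd, show (1 : Fin 2) ≠ 0 by decide, if_neg, reduceIte]
        rw [hfbder, hfder]
        simp
        ring
  · -- second part
    intro X Y hXY p hp
    have h1 := (hXY p hp).1
    have h2 := (hXY p hp).2
    have hfp := hfpos p hp
    constructor
    · linarith
    · have hYX : Y (p.1 - p.2) - X (p.1 + p.2) = 4 * f p := by linarith
      rw [hYX]
      have : f p ≠ 0 := ne_of_gt hfp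
      field_simp
      nlinarith [h1, h2]
end
end

section
/- Let I, J ⊆ ℝ be open intervals, U = I × J, and let f, b : U → ℝ be smooth with f everywhere positive. Then f and b satisfy the system ∂_x(f·b) = 0 and ∂_y(f·b) + 2·∂_x f = 0 on U if and only if there exist smooth functions Y, Ŷ : J → ℝ such that f(x,y)·b(x,y) = −Y(y) and f(x,y) = (x/2)·Y′(y) + Ŷ(y) for all (x,y) ∈ U. -/
noncomputable section

lemma one_le_inf : (1 : WithTop ℕ∞) ≤ ((⊤ : ℕ∞) : WithTop ℕ∞) := by
  exact_mod_cast le_top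

lemma inf_succ_le : ((⊤ : ℕ∞) : WithTop ℕ∞) + 1 ≤ ((⊤ : ℕ∞) : WithTop ℕ∞) := by
  exact_mod_cast le_top

lemma hasDerivAt_sliceX (F : ℝ × ℝ → ℝ) (x y : ℝ) (hF : DifferentiableAt ℝ F (x, y)) :
    HasDerivAt (fun t => F (t, y)) (pd 0 F (x, y)) x := by
  have h1 : HasDerivAt (fun t : ℝ => (t, y)) ((1 : ℝ), (0 : ℝ)) x :=
    (hasDerivAt_id x).prodMk (hasDerivAt_const _ _)
  have := hF.hasFDerivAt.comp_hasDerivAt x h1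
  simpa [pd, Function.comp_def] using this

lemma hasDerivAt_sliceY (F : ℝ × ℝ → ℝ) (x y : ℝ) (hF : DifferentiableAt ℝ F (x, y)) :
    HasDerivAt (fun t => F (x, t)) (pd 1 F (x, y)) y := by
  have h1 : HasDerivAt (fun t : ℝ => (x, t)) ((0 : ℝ), (1 : ℝ)) y :=
    (hasDerivAt_const _ _).prodMk (hasDerivAt_id y)
  have := hF.hasFDerivAt.comp_hasDerivAt y h1
  simpa [pd, Function.comp_def] using this

lemma const_of_hasDerivAt_zero {s : Set ℝ} (hs : IsOpen s) (hconv : Convex ℝ s)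
    {h : ℝ → ℝ} (hd : ∀ x ∈ s, HasDerivAt h 0 x) {x y : ℝ} (hx : x ∈ s) (hy : y ∈ s) :
    h x = h y := by
  apply hconv.is_const_of_fderivWithin_eq_zero
    (fun z hz => ((hd z hz).differentiableAt).differentiableWithinAt)
    (fun z hz => ?_) hx hy
  rw [fderivWithin_of_isOpen hs hz, (hd z hz).hasFDerivAt.fderiv]
  ext
  simp

/-- the Jordan-block case. On a product of open intervals `U = I × J`,
the system `∂_x(fb) = 0`, `∂_y(fb) + 2∂_x f = 0` holds iff `f·b = −Y(y)` and
`f = (x/2)·Y′(y) + Ŷ(y)` for smooth one-variable functions `Y, Ŷ` on `J`. -/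
theorem stmt8
    (I J : Set ℝ) (hIopen : IsOpen I) (hIint : I.OrdConnected)
    (hJopen : IsOpen J) (hJint : J.OrdConnected)
    (f b : ℝ × ℝ → ℝ)
    (hf : ContDiffOn ℝ (⊤ : ℕ∞) f (I ×ˢ J)) (hb : ContDiffOn ℝ (⊤ : ℕ∞) b (I ×ˢ J))
    (hfpos : ∀ p ∈ I ×ˢ J, 0 < f p) :
    (∀ p ∈ I ×ˢ J,
        pd 0 (fun q => f q * b q) p = 0 ∧
        pd 1 (fun q => f q * b q) p + 2 * pd 0 f p = 0) ↔
      ∃ Y Yhat : ℝ → ℝ, ContDiffOn ℝ (⊤ : ℕ∞) Y J ∧ ContDiffOn ℝ (⊤ : ℕ∞) Yhat J ∧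
        ∀ p ∈ I ×ˢ J, f p * b p = - Y p.2 ∧
          f p = (p.1 / 2) * deriv Y p.2 + Yhat p.2 := by
  have hU : IsOpen (I ×ˢ J) := hIopen.prod hJopen
  have hIconv : Convex ℝ I := convex_iff_ordConnected.mpr hIint
  set Ffb : ℝ × ℝ → ℝ := fun q => f q * b q with hFfbdef
  have hFfb : ContDiffOn ℝ (⊤ : ℕ∞) Ffb (I ×ˢ J) := hf.mul hb
  have hFdiff : ∀ p ∈ I ×ˢ J, DifferentiableAt ℝ Ffb p := fun p hp =>
    (hFfb.differentiableOn (by simp)).differentiableAt (hU.mem_nhds hp)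
  have hfdiff : ∀ p ∈ I ×ˢ J, DifferentiableAt ℝ f p := fun p hp =>
    (hf.differentiableOn (by simp)).differentiableAt (hU.mem_nhds hp)
  constructor
  · intro hsys
    rcases I.eq_empty_or_nonempty with hIe | ⟨x₀, hx₀⟩
    · refine ⟨0, 0, contDiffOn_const, contDiffOn_const, fun p hp => ?_⟩
      rw [Set.mem_prod, hIe] at hp
      exact absurd hp.1 (Set.notMem_empty _)
    set Y : ℝ → ℝ := fun t => -Ffb (x₀, t) with hYdef
    have hmaps : Set.MapsTo (fun t : ℝ => (x₀, t)) J (I ×ˢ J) := fun t ht => ⟨hx₀, ht⟩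
    have hYs : ContDiffOn ℝ (⊤ : ℕ∞) Y J :=
      (hFfb.comp ((contDiff_const.prodMk contDiff_id).contDiffOn) hmaps).neg
    -- fb is constant in x
    have hconst : ∀ p ∈ I ×ˢ J, Ffb p = -Y p.2 := by
      rintro ⟨x, y⟩ ⟨hx, hy⟩
      have : Ffb (x, y) = Ffb (x₀, y) :=
        const_of_hasDerivAt_zero hIopen hIconv (h := fun t => Ffb (t, y))
          (fun t ht => by
            have := hasDerivAt_sliceX Ffb t y (hFdiff _ ⟨ht, hy⟩)
            rwa [(hsys (t, y) ⟨ht, hy⟩).1] at this) hx hx₀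
      simpa [hYdef] using this
    -- the derivative of Y
    have hYderiv : ∀ y ∈ J, HasDerivAt Y (-pd 1 Ffb (x₀, y)) y := fun y hy =>
      (hasDerivAt_sliceY Ffb x₀ y (hFdiff _ ⟨hx₀, hy⟩)).neg
    have hpd1 : ∀ p ∈ I ×ˢ J, pd 1 Ffb p = -deriv Y p.2 := by
      rintro ⟨x, y⟩ ⟨hx, hy⟩
      have h1 : HasDerivAt (fun t => Ffb (x, t)) (pd 1 Ffb (x, y)) y :=
        hasDerivAt_sliceY Ffb x y (hFdiff _ ⟨hx, hy⟩)
      have hev : (fun t => Ffb (x, t)) =ᶠ[nhds y] (fun t => -Y t) := by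
        filter_upwards [hJopen.mem_nhds hy] with t ht
        exact hconst (x, t) ⟨hx, ht⟩
      have h2 := ((hYderiv y hy).neg).congr_of_eventuallyEq hev
      rw [neg_neg] at h2
      rw [h1.unique h2, (hYderiv y hy).deriv, neg_neg]
    have hpd0f : ∀ p ∈ I ×ˢ J, pd 0 f p = deriv Y p.2 / 2 := by
      intro p hp
      have h1 := (hsys p hp).2
      have h2 := hpd1 p hp
      rw [hFfbdef] at h2
      change pd 1 Ffb p + 2 * pd 0 f p = 0 at h1
      rw [← hFfbdef] at h2
      linarith
    set Yhat : ℝ → ℝ := fun t => f (x₀, t) - x₀ / 2 * deriv Y t with hYhatdef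
    have hYhats : ContDiffOn ℝ (⊤ : ℕ∞) Yhat J := by
      refine ContDiffOn.sub ?_ (ContDiffOn.mul contDiffOn_const ?_)
      · exact hf.comp ((contDiff_const.prodMk contDiff_id).contDiffOn) (fun t ht => ⟨hx₀, ht⟩)
      · exact hYs.deriv_of_isOpen hJopen inf_succ_le
    refine ⟨Y, Yhat, hYs, hYhats, ?_⟩
    rintro ⟨x, y⟩ ⟨hx, hy⟩
    refine ⟨hconst (x, y) ⟨hx, hy⟩, ?_⟩
    have hkey : f (x, y) - x * (deriv Y y / 2) = f (x₀, y) - x₀ * (deriv Y y / 2) := by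
      refine const_of_hasDerivAt_zero hIopen hIconv
        (h := fun t => f (t, y) - t * (deriv Y y / 2)) (fun t ht => ?_) hx hx₀
      have h1 : HasDerivAt (fun t => f (t, y)) (pd 0 f (t, y)) t :=
        hasDerivAt_sliceX f t y (hfdiff _ ⟨ht, hy⟩)
      have h2 : HasDerivAt (fun t : ℝ => t * (deriv Y y / 2)) (deriv Y y / 2) t := by
        simpa using (hasDerivAt_id t).mul_const (deriv Y y / 2)
      have := h1.sub h2
      rwa [hpd0f (t, y) ⟨ht, hy⟩, sub_self] at this
    simp only [hYhatdef]
    linarith [hkey]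
  · rintro ⟨Y, Yhat, hYs, hYhats, heq⟩
    rintro ⟨x, y⟩ ⟨hx, hy⟩
    have hYd : DifferentiableAt ℝ Y y :=
      (hYs.differentiableOn (by simp)).differentiableAt (hJopen.mem_nhds hy)
    have hdYs : ContDiffOn ℝ (⊤ : ℕ∞) (deriv Y) J := hYs.deriv_of_isOpen hJopen inf_succ_le
    have hdYd : DifferentiableAt ℝ (deriv Y) y :=
      (hdYs.differentiableOn (by simp)).differentiableAt (hJopen.mem_nhds hy)
    have hYhatd : DifferentiableAt ℝ Yhat y :=
      (hYhats.differentiableOn (by simp)).differentiableAt (hJopen.mem_nhds hy)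
    have hfb_ev : Ffb =ᶠ[nhds (x, y)] (fun q : ℝ × ℝ => -Y q.2) := by
      filter_upwards [hU.mem_nhds ⟨hx, hy⟩] with q hq
      exact (heq q hq).1
    have hf_ev : f =ᶠ[nhds (x, y)] (fun q : ℝ × ℝ => 2⁻¹ * q.1 * deriv Y q.2 + Yhat q.2) := by
      filter_upwards [hU.mem_nhds ⟨hx, hy⟩] with q hq
      rw [(heq q hq).2]; ring
    have hG : HasFDerivAt (fun q : ℝ × ℝ => -Y q.2)
        (-(deriv Y y • ContinuousLinearMap.snd ℝ ℝ ℝ)) (x, y) :=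
      (hYd.hasDerivAt.comp_hasFDerivAt (x, y) hasFDerivAt_snd).neg
    have h1 : HasFDerivAt (fun q : ℝ × ℝ => 2⁻¹ * q.1)
        ((2⁻¹ : ℝ) • (ContinuousLinearMap.fst ℝ ℝ ℝ)) (x, y) := hasFDerivAt_fst.const_mul 2⁻¹
    have h2 : HasFDerivAt (fun q : ℝ × ℝ => deriv Y q.2)
        (deriv (deriv Y) y • ContinuousLinearMap.snd ℝ ℝ ℝ) (x, y) :=
      hdYd.hasDerivAt.comp_hasFDerivAt (h₂ := deriv Y) (x, y) (hasFDerivAt_snd (p := (x, y)))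
    have h3 : HasFDerivAt (fun q : ℝ × ℝ => Yhat q.2)
        (deriv Yhat y • ContinuousLinearMap.snd ℝ ℝ ℝ) (x, y) :=
      hYhatd.hasDerivAt.comp_hasFDerivAt (x, y) hasFDerivAt_snd
    have hH := (h1.mul h2).add h3
    have e1 : fderiv ℝ Ffb (x, y) = -(deriv Y y • ContinuousLinearMap.snd ℝ ℝ ℝ) := by
      rw [hfb_ev.fderiv_eq]; exact hG.fderiv
    have e2 := hf_ev.fderiv_eq.trans hH.fderiv
    constructor
    · show fderiv ℝ Ffb (x, y) _ = 0
      rw [e1]; simp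
    · show fderiv ℝ Ffb (x, y) _ + 2 * fderiv ℝ f (x, y) _ = 0
      rw [e1, e2]
      simp
      ring
end
end

section
/- Let J ⊆ ℝ be an open interval, Y : J → ℝ smooth, I ⊆ ℝ an open interval, and U = I × J with Y(y) + x ≠ 0 for all (x,y) ∈ U. Suppose smooth functions a,b,c on U satisfy the system (53): ∂_y a = 0; (Y+x)·∂_x a + (Y+x)·∂_y b + 2a + Y′·b = 0; (Y+x)·∂_x b + (Y+x)·∂_y c + b + 2Y′·c = 0; ∂_x c = 0. Then, regarding a as a smooth function of x alone and c as a smooth function of y alone, the compatibility identity −a″(x)·x + c″(y)·x + c″(y)·Y(y) − 3a′(x) + 3c′(y)·Y′(y) − a″(x)·Y(y) + 2Y″(y)·c(y) = 0 holds at every point of U. If moreover Y′ vanishes at no point of J, then a⁗(x) = 0 for all x ∈ I, i.e. a is a polynomial of degree at most 3. -/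
noncomputable section

open Filter Topology

variable {U : Set (ℝ × ℝ)} {f g : ℝ × ℝ → ℝ} {p : ℝ × ℝ} {i j : Fin 2}

lemma diffAt (hU : IsOpen U) (hf : ContDiffOn ℝ (⊤ : ℕ∞) f U) (hp : p ∈ U) :
    DifferentiableAt ℝ f p :=
  (hf.contDiffAt (hU.mem_nhds hp)).differentiableAt (by simp)

lemma smooth_pd (hU : IsOpen U) (hf : ContDiffOn ℝ (⊤ : ℕ∞) f U) (i : Fin 2) :
    ContDiffOn ℝ (⊤ : ℕ∞) (pd i f) U :=
  (hf.fderiv_of_isOpen hU (by simp)).clm_apply contDiffOn_const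

lemma pd_zero_on (hU : IsOpen U) (h : ∀ q ∈ U, f q = 0) (hp : p ∈ U) (i : Fin 2) :
    pd i f p = 0 := by
  have hev : f =ᶠ[𝓝 p] (fun _ => (0:ℝ)) :=
    Filter.eventually_of_mem (hU.mem_nhds hp) h
  unfold pd
  rw [hev.fderiv_eq]
  simp

lemma pd_comm (hU : IsOpen U) (hf : ContDiffOn ℝ (⊤ : ℕ∞) f U) (hp : p ∈ U) (i j : Fin 2) :
    pd i (pd j f) p = pd j (pd i f) p := by
  have hft : ContDiffAt ℝ (⊤ : ℕ∞) f p := hf.contDiffAt (hU.mem_nhds hp)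
  have hd : DifferentiableAt ℝ (fderiv ℝ f) p :=
    (hft.fderiv_right (m := (⊤:ℕ∞)) (by exact_mod_cast le_top)).differentiableAt (by simp)
  have hsym := hft.isSymmSndFDerivAt (by rw [minSmoothness_of_isRCLikeNormedField]; exact WithTop.coe_le_coe.2 le_top)
  have key : ∀ v w : ℝ × ℝ, fderiv ℝ (fun q => fderiv ℝ f q w) p v
      = fderiv ℝ (fderiv ℝ f) p v w := by
    intro v w
    rw [fderiv_clm_apply hd (differentiableAt_const w)]
    simp
  unfold pd
  rw [key, key, hsym]

lemma pd_add (hf : DifferentiableAt ℝ f p) (hg : DifferentiableAt ℝ g p) (i : Fin 2) :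
    pd i (fun q => f q + g q) p = pd i f p + pd i g p := by
  unfold pd; rw [fderiv_fun_add hf hg]; simp

lemma pd_sub (hf : DifferentiableAt ℝ f p) (hg : DifferentiableAt ℝ g p) (i : Fin 2) :
    pd i (fun q => f q - g q) p = pd i f p - pd i g p := by
  unfold pd; rw [fderiv_fun_sub hf hg]; simp

lemma pd_mul (hf : DifferentiableAt ℝ f p) (hg : DifferentiableAt ℝ g p) (i : Fin 2) :
    pd i (fun q => f q * g q) p = f p * pd i g p + g p * pd i f p := by
  unfold pd; rw [fderiv_fun_mul hf hg]; simp

lemma pd_const_mul (hf : DifferentiableAt ℝ f p) (k : ℝ) (i : Fin 2) :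
    pd i (fun q => k * f q) p = k * pd i f p := by
  unfold pd; rw [fderiv_const_mul hf]; simp

lemma hasFDerivAt_snd_comp {Y : ℝ → ℝ} (hY : DifferentiableAt ℝ Y p.2) :
    HasFDerivAt (fun q : ℝ × ℝ => Y q.2) ((deriv Y p.2) • ContinuousLinearMap.snd ℝ ℝ ℝ) p :=
  hY.hasDerivAt.comp_hasFDerivAt p hasFDerivAt_snd

lemma diff_snd_comp {Y : ℝ → ℝ} (hY : DifferentiableAt ℝ Y p.2) :
    DifferentiableAt ℝ (fun q : ℝ × ℝ => Y q.2) p :=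
  (hasFDerivAt_snd_comp hY).differentiableAt

lemma pd0_snd_comp {Y : ℝ → ℝ} (hY : DifferentiableAt ℝ Y p.2) :
    pd 0 (fun q : ℝ × ℝ => Y q.2) p = 0 := by
  unfold pd; rw [(hasFDerivAt_snd_comp hY).fderiv]; simp

lemma pd1_snd_comp {Y : ℝ → ℝ} (hY : DifferentiableAt ℝ Y p.2) :
    pd 1 (fun q : ℝ × ℝ => Y q.2) p = deriv Y p.2 := by
  unfold pd; rw [(hasFDerivAt_snd_comp hY).fderiv]; simp

lemma pd0_add_fst {Y : ℝ → ℝ} (hY : DifferentiableAt ℝ Y p.2) :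
    pd 0 (fun q : ℝ × ℝ => Y q.2 + q.1) p = 1 := by
  unfold pd
  rw [fderiv_fun_add (diff_snd_comp hY) differentiableAt_fst]
  rw [(hasFDerivAt_snd_comp hY).fderiv]
  simp [fderiv_fst]

lemma pd1_add_fst {Y : ℝ → ℝ} (hY : DifferentiableAt ℝ Y p.2) :
    pd 1 (fun q : ℝ × ℝ => Y q.2 + q.1) p = deriv Y p.2 := by
  unfold pd
  rw [fderiv_fun_add (diff_snd_comp hY) differentiableAt_fst]
  rw [(hasFDerivAt_snd_comp hY).fderiv]
  simp [fderiv_fst]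

lemma pd_swap_zero (hU : IsOpen U) (hf : ContDiffOn ℝ (⊤ : ℕ∞) f U)
    (h : ∀ q ∈ U, pd i f q = 0) (hp : p ∈ U) (j : Fin 2) :
    pd j (pd i f) p = 0 ∧ pd i (pd j f) p = 0 := by
  have h1 : pd j (pd i f) p = 0 := pd_zero_on hU h hp j
  exact ⟨h1, by rw [pd_comm hU hf hp]; exact h1⟩


/-- For the metric `ds² = 2(Y(y)+x)dxdy`, the system (53) for a quadratic
integral `F = a p₁² + b p₁p₂ + c p₂²` implies the compatibility identity (54); if moreover
`Y′` vanishes nowhere, then `a'''' = 0`. -/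
theorem stmt11
    (I J : Set ℝ) (hIopen : IsOpen I) (hIint : I.OrdConnected)
    (hJopen : IsOpen J) (hJint : J.OrdConnected)
    (Y : ℝ → ℝ) (hY : ContDiffOn ℝ (⊤ : ℕ∞) Y J)
    (hne : ∀ p ∈ I ×ˢ J, Y p.2 + p.1 ≠ 0)
    (a b c : ℝ × ℝ → ℝ)
    (ha : ContDiffOn ℝ (⊤ : ℕ∞) a (I ×ˢ J)) (hb : ContDiffOn ℝ (⊤ : ℕ∞) b (I ×ˢ J))
    (hc : ContDiffOn ℝ (⊤ : ℕ∞) c (I ×ˢ J))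
    (hsys : ∀ p ∈ I ×ˢ J,
      pd 1 a p = 0 ∧
      (Y p.2 + p.1) * pd 0 a p + (Y p.2 + p.1) * pd 1 b p
        + 2 * a p + deriv Y p.2 * b p = 0 ∧
      (Y p.2 + p.1) * pd 0 b p + (Y p.2 + p.1) * pd 1 c p
        + b p + 2 * deriv Y p.2 * c p = 0 ∧
      pd 0 c p = 0) :
    (∀ p ∈ I ×ˢ J,
      - pd 0 (pd 0 a) p * p.1 + pd 1 (pd 1 c) p * p.1 + pd 1 (pd 1 c) p * Y p.2
        - 3 * pd 0 a p + 3 * pd 1 c p * deriv Y p.2 - pd 0 (pd 0 a) p * Y p.2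
        + 2 * deriv (deriv Y) p.2 * c p = 0) ∧
    ((∀ y ∈ J, deriv Y y ≠ 0) →
      ∀ p ∈ I ×ˢ J, pd 0 (pd 0 (pd 0 (pd 0 a))) p = 0) := by
  have hU : IsOpen (I ×ˢ J) := hIopen.prod hJopen
  -- smoothness of derivatives of Y
  have hYd : ContDiffOn ℝ (⊤ : ℕ∞) (deriv Y) J :=
    hY.deriv_of_isOpen hJopen (m := (⊤ : ℕ∞)) (by exact_mod_cast le_top)
  have hYdd : ContDiffOn ℝ (⊤ : ℕ∞) (deriv (deriv Y)) J :=
    hYd.deriv_of_isOpen hJopen (m := (⊤ : ℕ∞)) (by exact_mod_cast le_top)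
  -- smoothness of iterated partials
  have sa0 := smooth_pd hU ha 0
  have sa00 := smooth_pd hU sa0 0
  have sa000 := smooth_pd hU sa00 0
  have sb0 := smooth_pd hU hb 0
  have sb1 := smooth_pd hU hb 1
  have sc1 := smooth_pd hU hc 1
  have sc11 := smooth_pd hU sc1 1
  -- vanishing facts
  have za1 : ∀ q ∈ I ×ˢ J, pd 1 a q = 0 := fun q hq => (hsys q hq).1
  have zc0 : ∀ q ∈ I ×ˢ J, pd 0 c q = 0 := fun q hq => (hsys q hq).2.2.2
  have za10 : ∀ q ∈ I ×ˢ J, pd 1 (pd 0 a) q = 0 :=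
    fun q hq => (pd_swap_zero hU ha za1 hq 0).2
  have za100 : ∀ q ∈ I ×ˢ J, pd 1 (pd 0 (pd 0 a)) q = 0 :=
    fun q hq => (pd_swap_zero hU sa0 za10 hq 0).2
  have za1000 : ∀ q ∈ I ×ˢ J, pd 1 (pd 0 (pd 0 (pd 0 a))) q = 0 :=
    fun q hq => (pd_swap_zero hU sa00 za100 hq 0).2
  have zc01 : ∀ q ∈ I ×ˢ J, pd 0 (pd 1 c) q = 0 :=
    fun q hq => (pd_swap_zero hU hc zc0 hq 1).2
  have zc011 : ∀ q ∈ I ×ˢ J, pd 0 (pd 1 (pd 1 c)) q = 0 :=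
    fun q hq => (pd_swap_zero hU sc1 zc01 hq 1).2
  have zc0111 : ∀ q ∈ I ×ˢ J, pd 0 (pd 1 (pd 1 (pd 1 c))) q = 0 :=
    fun q hq => (pd_swap_zero hU sc11 zc011 hq 1).2
  -- part 1
  have part1 : ∀ p ∈ I ×ˢ J,
      - pd 0 (pd 0 a) p * p.1 + pd 1 (pd 1 c) p * p.1 + pd 1 (pd 1 c) p * Y p.2
        - 3 * pd 0 a p + 3 * pd 1 c p * deriv Y p.2 - pd 0 (pd 0 a) p * Y p.2
        + 2 * deriv (deriv Y) p.2 * c p = 0 := by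
    intro p hp
    have hpJ : p.2 ∈ J := hp.2
    have dYp : DifferentiableAt ℝ Y p.2 :=
      (hY.contDiffAt (hJopen.mem_nhds hpJ)).differentiableAt (by simp)
    have dY'p : DifferentiableAt ℝ (deriv Y) p.2 :=
      (hYd.contDiffAt (hJopen.mem_nhds hpJ)).differentiableAt (by simp)
    have dD : DifferentiableAt ℝ (fun q : ℝ × ℝ => Y q.2 + q.1) p :=
      (diff_snd_comp dYp).add differentiableAt_fst
    have dSY' : DifferentiableAt ℝ (fun q : ℝ × ℝ => deriv Y q.2) p := diff_snd_comp dY'p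
    have da := diffAt hU ha hp
    have db := diffAt hU hb hp
    have dc := diffAt hU hc hp
    have da0 := diffAt hU sa0 hp
    have db0 := diffAt hU sb0 hp
    have db1 := diffAt hU sb1 hp
    have dc1 := diffAt hU sc1 hp
    -- d/dx of equation (2)
    have E2x : pd 0 (fun q => (Y q.2 + q.1) * pd 0 a q + (Y q.2 + q.1) * pd 1 b q
        + 2 * a q + deriv Y q.2 * b q) p = 0 :=
      pd_zero_on hU (fun q hq => (hsys q hq).2.1) hp 0
    rw [pd_add (((dD.fun_mul da0).fun_add (dD.fun_mul db1)).fun_add (da.const_mul 2)) (dSY'.fun_mul db),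
        pd_add ((dD.fun_mul da0).fun_add (dD.fun_mul db1)) (da.const_mul 2),
        pd_add (dD.fun_mul da0) (dD.fun_mul db1),
        pd_mul dD da0, pd_mul dD db1, pd_const_mul da, pd_mul dSY' db,
        pd0_add_fst dYp, pd0_snd_comp dY'p] at E2x
    -- d/dy of equation (3)
    have E3y : pd 1 (fun q => (Y q.2 + q.1) * pd 0 b q + (Y q.2 + q.1) * pd 1 c q
        + b q + 2 * deriv Y q.2 * c q) p = 0 :=
      pd_zero_on hU (fun q hq => (hsys q hq).2.2.1) hp 1
    rw [pd_add (((dD.fun_mul db0).fun_add (dD.fun_mul dc1)).fun_add db) ((dSY'.const_mul 2).fun_mul dc),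
        pd_add ((dD.fun_mul db0).fun_add (dD.fun_mul dc1)) db,
        pd_add (dD.fun_mul db0) (dD.fun_mul dc1),
        pd_mul dD db0, pd_mul dD dc1, pd_mul (dSY'.const_mul 2) dc,
        pd_const_mul dSY' 2,
        pd1_add_fst dYp, pd1_snd_comp dY'p] at E3y
    have symm_b : pd 0 (pd 1 b) p = pd 1 (pd 0 b) p := pd_comm hU hb hp 0 1
    rw [symm_b] at E2x
    linear_combination E3y - E2x
  refine ⟨part1, ?_⟩
  -- part 2
  intro hY' p hp
  -- step 1: -a''' (Y+x) - 4 a'' + c'' = 0 on U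
  have zG : ∀ p ∈ I ×ˢ J, pd 1 (pd 1 c) p - pd 0 (pd 0 (pd 0 a)) p * (Y p.2 + p.1)
      - 4 * pd 0 (pd 0 a) p = 0 := by
    intro p hp
    have hpJ : p.2 ∈ J := hp.2
    have dYp : DifferentiableAt ℝ Y p.2 :=
      (hY.contDiffAt (hJopen.mem_nhds hpJ)).differentiableAt (by simp)
    have dY'p : DifferentiableAt ℝ (deriv Y) p.2 :=
      (hYd.contDiffAt (hJopen.mem_nhds hpJ)).differentiableAt (by simp)
    have dY''p : DifferentiableAt ℝ (deriv (deriv Y)) p.2 :=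
      (hYdd.contDiffAt (hJopen.mem_nhds hpJ)).differentiableAt (by simp)
    have dD : DifferentiableAt ℝ (fun q : ℝ × ℝ => Y q.2 + q.1) p :=
      (diff_snd_comp dYp).add differentiableAt_fst
    have dSY' : DifferentiableAt ℝ (fun q : ℝ × ℝ => deriv Y q.2) p := diff_snd_comp dY'p
    have dSY'' : DifferentiableAt ℝ (fun q : ℝ × ℝ => deriv (deriv Y) q.2) p :=
      diff_snd_comp dY''p
    have dc := diffAt hU hc hp
    have da0 := diffAt hU sa0 hp
    have da00 := diffAt hU sa00 hp
    have dc1 := diffAt hU sc1 hp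
    have dc11 := diffAt hU sc11 hp
    have zH : ∀ q ∈ I ×ˢ J,
        (pd 1 (pd 1 c) q - pd 0 (pd 0 a) q) * (Y q.2 + q.1) + 3 * pd 1 c q * deriv Y q.2
          - 3 * pd 0 a q + 2 * deriv (deriv Y) q.2 * c q = 0 := by
      intro q hq
      linear_combination part1 q hq
    have hG : pd 0 (fun q => (pd 1 (pd 1 c) q - pd 0 (pd 0 a) q) * (Y q.2 + q.1)
        + 3 * pd 1 c q * deriv Y q.2 - 3 * pd 0 a q
        + 2 * deriv (deriv Y) q.2 * c q) p = 0 :=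
      pd_zero_on hU zH hp 0
    rw [pd_add ((((dc11.fun_sub da00).fun_mul dD).fun_add ((dc1.const_mul 3).fun_mul dSY')).fun_sub
          (da0.const_mul 3)) ((dSY''.const_mul 2).fun_mul dc),
        pd_sub (((dc11.fun_sub da00).fun_mul dD).fun_add ((dc1.const_mul 3).fun_mul dSY'))
          (da0.const_mul 3),
        pd_add ((dc11.fun_sub da00).fun_mul dD) ((dc1.const_mul 3).fun_mul dSY'),
        pd_mul (dc11.fun_sub da00) dD, pd_sub dc11 da00,
        pd_mul (dc1.const_mul 3) dSY', pd_const_mul dc1 3,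
        pd_const_mul da0 3,
        pd_mul (dSY''.const_mul 2) dc, pd_const_mul dSY'' 2,
        pd0_add_fst dYp, pd0_snd_comp dY'p, pd0_snd_comp dY''p,
        zc0 p hp, zc01 p hp, zc011 p hp] at hG
    have symm_a := pd_comm hU sa0 hp 0 0
    linear_combination hG
  -- step 2: c''' = a''' Y' on U
  have zK : ∀ p ∈ I ×ˢ J, pd 1 (pd 1 (pd 1 c)) p
      - pd 0 (pd 0 (pd 0 a)) p * deriv Y p.2 = 0 := by
    intro p hp
    have hpJ : p.2 ∈ J := hp.2
    have dYp : DifferentiableAt ℝ Y p.2 :=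
      (hY.contDiffAt (hJopen.mem_nhds hpJ)).differentiableAt (by simp)
    have dD : DifferentiableAt ℝ (fun q : ℝ × ℝ => Y q.2 + q.1) p :=
      (diff_snd_comp dYp).add differentiableAt_fst
    have da00 := diffAt hU sa00 hp
    have da000 := diffAt hU sa000 hp
    have dc11 := diffAt hU sc11 hp
    have hK : pd 1 (fun q => pd 1 (pd 1 c) q
        - pd 0 (pd 0 (pd 0 a)) q * (Y q.2 + q.1) - 4 * pd 0 (pd 0 a) q) p = 0 :=
      pd_zero_on hU zG hp 1
    rw [pd_sub (dc11.fun_sub (da000.fun_mul dD)) (da00.const_mul 4),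
        pd_sub dc11 (da000.fun_mul dD),
        pd_mul da000 dD, pd_const_mul da00 4,
        pd1_add_fst dYp,
        za100 p hp, za1000 p hp] at hK
    linear_combination hK
  -- step 3: a'''' Y' = 0
  have hpJ : p.2 ∈ J := hp.2
  have dY'p : DifferentiableAt ℝ (deriv Y) p.2 :=
    (hYd.contDiffAt (hJopen.mem_nhds hpJ)).differentiableAt (by simp)
  have dSY' : DifferentiableAt ℝ (fun q : ℝ × ℝ => deriv Y q.2) p := diff_snd_comp dY'p
  have da000 := diffAt hU sa000 hp
  have hF : pd 0 (fun q => pd 1 (pd 1 (pd 1 c)) q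
      - pd 0 (pd 0 (pd 0 a)) q * deriv Y q.2) p = 0 := by
    have sc111 := smooth_pd hU sc11 1
    have dc111 := diffAt hU sc111 hp
    exact pd_zero_on hU zK hp 0
  have dc111 := diffAt hU (smooth_pd hU sc11 1) hp
  rw [pd_sub dc111 (da000.fun_mul dSY'),
      pd_mul da000 dSY',
      pd0_snd_comp dY'p,
      zc0111 p hp] at hF
  have hne' : deriv Y p.2 ≠ 0 := hY' p.2 hpJ
  have : deriv Y p.2 * pd 0 (pd 0 (pd 0 (pd 0 a))) p = 0 := by linear_combination -hF
  rcases mul_eq_zero.1 this with h | h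
  · exact absurd h hne'
  · exact h
end
end

section
/- Let I₁, I₂ ⊆ ℝ be open intervals, let X, X₁ : I₁ → ℝ and Y, Y₁ : I₂ → ℝ be smooth and nowhere zero, and assume X(x) ≠ Y(y) for all (x,y) ∈ U := I₁ × I₂. Then the two metrics on U given by g: E = (X−Y)·X₁, F = 0, G = (X−Y)·Y₁ (i.e. ds²_g = (X−Y)(X₁ dx² + Y₁ dy²)) and ḡ: Ē = (1/X − 1/Y)·X₁/X, F̄ = 0, Ḡ = (1/X − 1/Y)·Y₁/Y (i.e. ds²_{ḡ} = (1/X − 1/Y)(X₁/X dx² + Y₁/Y dy²)) have identical projective connection coefficients: K_i(g) = K_i(ḡ) on U for i = 0,1,2,3. Hence g and ḡ are projectively equivalent (have the same unparameterized geodesics). -/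
noncomputable section

/-- Read off both partial derivatives from a `HasFDerivAt` fact. -/
lemma pd_spec {f : ℝ × ℝ → ℝ} {L : ℝ × ℝ →L[ℝ] ℝ} {p : ℝ × ℝ} (h : HasFDerivAt f L p) :
    pd 0 f p = L (1, 0) ∧ pd 1 f p = L (0, 1) := by
  unfold pd; rw [h.fderiv]; simp

set_option maxHeartbeats 2000000 in
/-- The Liouville metric `g = (X−Y)(X₁dx² + Y₁dy²)` and
`ḡ = (1/X − 1/Y)(X₁/X dx² + Y₁/Y dy²)` have identical projective connection coefficients,
hence are projectively equivalent. -/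
theorem stmt14
    (I₁ I₂ : Set ℝ) (hI₁open : IsOpen I₁) (hI₁int : I₁.OrdConnected)
    (hI₂open : IsOpen I₂) (hI₂int : I₂.OrdConnected)
    (X X₁ Y Y₁ : ℝ → ℝ)
    (hX : ContDiffOn ℝ (⊤ : ℕ∞) X I₁) (hX₁ : ContDiffOn ℝ (⊤ : ℕ∞) X₁ I₁)
    (hY : ContDiffOn ℝ (⊤ : ℕ∞) Y I₂) (hY₁ : ContDiffOn ℝ (⊤ : ℕ∞) Y₁ I₂)
    (hX0 : ∀ x ∈ I₁, X x ≠ 0) (hX₁0 : ∀ x ∈ I₁, X₁ x ≠ 0)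
    (hY0 : ∀ y ∈ I₂, Y y ≠ 0) (hY₁0 : ∀ y ∈ I₂, Y₁ y ≠ 0)
    (hXY : ∀ p ∈ I₁ ×ˢ I₂, X p.1 ≠ Y p.2)
    (E F G Eb Fb Gb : ℝ × ℝ → ℝ)
    (hE : ∀ p, E p = (X p.1 - Y p.2) * X₁ p.1)
    (hF : ∀ p, F p = 0)
    (hG : ∀ p, G p = (X p.1 - Y p.2) * Y₁ p.2)
    (hEb : ∀ p, Eb p = (1 / X p.1 - 1 / Y p.2) * (X₁ p.1 / X p.1))
    (hFb : ∀ p, Fb p = 0)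
    (hGb : ∀ p, Gb p = (1 / X p.1 - 1 / Y p.2) * (Y₁ p.2 / Y p.2)) :
    ∀ p ∈ I₁ ×ˢ I₂,
      pK0 E F G p = pK0 Eb Fb Gb p ∧
      pK1 E F G p = pK1 Eb Fb Gb p ∧
      pK2 E F G p = pK2 Eb Fb Gb p ∧
      pK3 E F G p = pK3 Eb Fb Gb p := by
  
  intro p hp
  obtain ⟨hx, hy⟩ := hp
  -- abbreviations
  set a := X p.1 with ha_def
  set b := Y p.2 with hb_def
  set a1 := X₁ p.1 with ha1_def
  set b1 := Y₁ p.2 with hb1_def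
  set da := deriv X p.1 with hda_def
  set db := deriv Y p.2 with hdb_def
  set da1 := deriv X₁ p.1 with hda1_def
  set db1 := deriv Y₁ p.2 with hdb1_def
  have ha : a ≠ 0 := hX0 _ hx
  have hb : b ≠ 0 := hY0 _ hy
  have ha1 : a1 ≠ 0 := hX₁0 _ hx
  have hb1 : b1 ≠ 0 := hY₁0 _ hy
  have habne : a ≠ b := hXY p ⟨hx, hy⟩
  have hab : a - b ≠ 0 := sub_ne_zero.mpr habne
  -- one-variable derivatives
  have hXd : HasDerivAt X da p.1 :=
    ((hX.contDiffAt (hI₁open.mem_nhds hx)).differentiableAt (by simp)).hasDerivAt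
  have hYd : HasDerivAt Y db p.2 :=
    ((hY.contDiffAt (hI₂open.mem_nhds hy)).differentiableAt (by simp)).hasDerivAt
  have hX₁d : HasDerivAt X₁ da1 p.1 :=
    ((hX₁.contDiffAt (hI₁open.mem_nhds hx)).differentiableAt (by simp)).hasDerivAt
  have hY₁d : HasDerivAt Y₁ db1 p.2 :=
    ((hY₁.contDiffAt (hI₂open.mem_nhds hy)).differentiableAt (by simp)).hasDerivAt
  have h1X : HasDerivAt (fun x => 1 / X x) ((0 * X p.1 - 1 * da) / X p.1 ^ 2) p.1 :=
    (hasDerivAt_const p.1 1).div hXd ha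
  have h1Y : HasDerivAt (fun y => 1 / Y y) ((0 * Y p.2 - 1 * db) / Y p.2 ^ 2) p.2 :=
    (hasDerivAt_const p.2 1).div hYd hb
  have hA : HasDerivAt (fun x => X₁ x / X x) ((da1 * X p.1 - X₁ p.1 * da) / X p.1 ^ 2) p.1 :=
    hX₁d.div hXd ha
  have hB : HasDerivAt (fun y => Y₁ y / Y y) ((db1 * Y p.2 - Y₁ p.2 * db) / Y p.2 ^ 2) p.2 :=
    hY₁d.div hYd hb
  -- lift through fst/snd
  have FX := hXd.hasFDerivAt.comp p hasFDerivAt_fst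
  have FY := hYd.hasFDerivAt.comp p hasFDerivAt_snd
  have FX₁ := hX₁d.hasFDerivAt.comp p hasFDerivAt_fst
  have FY₁ := hY₁d.hasFDerivAt.comp p hasFDerivAt_snd
  have F1X := h1X.hasFDerivAt.comp p hasFDerivAt_fst
  have F1Y := h1Y.hasFDerivAt.comp p hasFDerivAt_snd
  have FA := hA.hasFDerivAt.comp p hasFDerivAt_fst
  have FB := hB.hasFDerivAt.comp p hasFDerivAt_snd
  -- full fderivs of the metric components
  have hEeq : E = fun q : ℝ × ℝ => (X q.1 - Y q.2) * X₁ q.1 := funext hE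
  have hFeq : F = fun _ : ℝ × ℝ => (0 : ℝ) := funext hF
  have hGeq : G = fun q : ℝ × ℝ => (X q.1 - Y q.2) * Y₁ q.2 := funext hG
  have hEbeq : Eb = fun q : ℝ × ℝ => (1 / X q.1 - 1 / Y q.2) * (X₁ q.1 / X q.1) := funext hEb
  have hFbeq : Fb = fun _ : ℝ × ℝ => (0 : ℝ) := funext hFb
  have hGbeq : Gb = fun q : ℝ × ℝ => (1 / X q.1 - 1 / Y q.2) * (Y₁ q.2 / Y q.2) := funext hGb
  have hEF : HasFDerivAt (fun q : ℝ × ℝ => (X q.1 - Y q.2) * X₁ q.1) _ p := (FX.sub FY).mul FX₁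
  have hGF : HasFDerivAt (fun q : ℝ × ℝ => (X q.1 - Y q.2) * Y₁ q.2) _ p := (FX.sub FY).mul FY₁
  have hEbF : HasFDerivAt (fun q : ℝ × ℝ => (1 / X q.1 - 1 / Y q.2) * (X₁ q.1 / X q.1)) _ p :=
    (F1X.sub F1Y).mul FA
  have hGbF : HasFDerivAt (fun q : ℝ × ℝ => (1 / X q.1 - 1 / Y q.2) * (Y₁ q.2 / Y q.2)) _ p :=
    (F1X.sub F1Y).mul FB
  -- the partial derivatives
  have pE0 : pd 0 E p = da * a1 + (a - b) * da1 := by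
    rw [hEeq, (pd_spec hEF).1]; simp; ring
  have pE1 : pd 1 E p = -(db * a1) := by
    rw [hEeq, (pd_spec hEF).2]; simp; ring
  have pG0 : pd 0 G p = da * b1 := by
    rw [hGeq, (pd_spec hGF).1]; simp; ring
  have pG1 : pd 1 G p = -(db * b1) + (a - b) * db1 := by
    rw [hGeq, (pd_spec hGF).2]; simp; ring
  have pF0 : pd 0 F p = 0 := by rw [hFeq]; unfold pd; simp
  have pF1 : pd 1 F p = 0 := by rw [hFeq]; unfold pd; simp
  have pFb0 : pd 0 Fb p = 0 := by rw [hFbeq]; unfold pd; simp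
  have pFb1 : pd 1 Fb p = 0 := by rw [hFbeq]; unfold pd; simp
  have pEb0 : pd 0 Eb p
      = -(da / a ^ 2) * (a1 / a) + (1 / a - 1 / b) * ((da1 * a - a1 * da) / a ^ 2) := by
    rw [hEbeq, (pd_spec hEbF).1]; simp; simp only [← ha_def, ← hb_def, ← ha1_def, ← hb1_def]; field_simp; ring
  have pEb1 : pd 1 Eb p = (db / b ^ 2) * (a1 / a) := by
    rw [hEbeq, (pd_spec hEbF).2]; simp; simp only [← ha_def, ← hb_def, ← ha1_def, ← hb1_def]; field_simp
  have pGb0 : pd 0 Gb p = -(da / a ^ 2) * (b1 / b) := by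
    rw [hGbeq, (pd_spec hGbF).1]; simp; simp only [← ha_def, ← hb_def, ← ha1_def, ← hb1_def]; field_simp
  have pGb1 : pd 1 Gb p
      = (db / b ^ 2) * (b1 / b) + (1 / a - 1 / b) * ((db1 * b - b1 * db) / b ^ 2) := by
    rw [hGbeq, (pd_spec hGbF).2]; simp; simp only [← ha_def, ← hb_def, ← ha1_def, ← hb1_def]; field_simp; ring
  -- metric component reductions
  have c00 : gc E F G 0 0 = E := rfl
  have c01 : gc E F G 0 1 = F := rfl
  have c10 : gc E F G 1 0 = F := rfl
  have c11 : gc E F G 1 1 = G := rfl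
  have d00 : gc Eb Fb Gb 0 0 = Eb := rfl
  have d01 : gc Eb Fb Gb 0 1 = Fb := rfl
  have d10 : gc Eb Fb Gb 1 0 = Fb := rfl
  have d11 : gc Eb Fb Gb 1 1 = Gb := rfl
  -- inverse metric values at p
  have i00 : gInv E F G 0 0 p = 1 / ((a - b) * a1) := by
    show G p / (E p * G p - F p ^ 2) = _
    rw [hE p, hF p, hG p]; simp only [← ha_def, ← hb_def, ← ha1_def, ← hb1_def]; field_simp; try ring
  have i01 : gInv E F G 0 1 p = 0 := by
    show -F p / (E p * G p - F p ^ 2) = _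
    rw [hF p]; simp
  have i10 : gInv E F G 1 0 p = 0 := by
    show -F p / (E p * G p - F p ^ 2) = _
    rw [hF p]; simp
  have i11 : gInv E F G 1 1 p = 1 / ((a - b) * b1) := by
    show E p / (E p * G p - F p ^ 2) = _
    rw [hE p, hF p, hG p]; simp only [← ha_def, ← hb_def, ← ha1_def, ← hb1_def]; field_simp; try ring
  have h1ab : 1 / a - 1 / b ≠ 0 := by
    rw [div_sub_div _ _ ha hb]
    exact div_ne_zero (by simpa using sub_ne_zero.mpr (Ne.symm habne)) (mul_ne_zero ha hb)
  have hDb : Eb p * Gb p - Fb p ^ 2 = (a - b) ^ 2 * a1 * b1 / (a ^ 3 * b ^ 3) := by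
    rw [hEb p, hFb p, hGb p]; simp only [← ha_def, ← hb_def, ← ha1_def, ← hb1_def]; field_simp; ring
  have hDbne : (a - b) ^ 2 * a1 * b1 / (a ^ 3 * b ^ 3) ≠ 0 := by
    apply div_ne_zero (mul_ne_zero (mul_ne_zero (pow_ne_zero _ hab) ha1) hb1)
    exact mul_ne_zero (pow_ne_zero _ ha) (pow_ne_zero _ hb)
  have j00 : gInv Eb Fb Gb 0 0 p = -(a ^ 2 * b) / ((a - b) * a1) := by
    show Gb p / (Eb p * Gb p - Fb p ^ 2) = _
    rw [hDb, hGb p]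
    rw [div_eq_div_iff hDbne (mul_ne_zero hab ha1)]
    simp only [← ha_def, ← hb_def, ← ha1_def, ← hb1_def]
    field_simp
    ring
  have j01 : gInv Eb Fb Gb 0 1 p = 0 := by
    show -Fb p / (Eb p * Gb p - Fb p ^ 2) = _
    rw [hFb p]; simp
  have j10 : gInv Eb Fb Gb 1 0 p = 0 := by
    show -Fb p / (Eb p * Gb p - Fb p ^ 2) = _
    rw [hFb p]; simp
  have j11 : gInv Eb Fb Gb 1 1 p = -(a * b ^ 2) / ((a - b) * b1) := by
    show Eb p / (Eb p * Gb p - Fb p ^ 2) = _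
    rw [hDb, hEb p]
    rw [div_eq_div_iff hDbne (mul_ne_zero hab hb1)]
    simp only [← ha_def, ← hb_def, ← ha1_def, ← hb1_def]
    field_simp
    ring
  refine ⟨?_, ?_, ?_, ?_⟩
  · simp only [pK0, Chr, Fin.sum_univ_two, c00, c01, c10, c11, d00, d01, d10, d11,
      i00, i01, i10, i11, j00, j01, j10, j11,
      pE0, pE1, pF0, pF1, pG0, pG1, pEb0, pEb1, pFb0, pFb1, pGb0, pGb1]
    field_simp
    ring
  · simp only [pK1, Chr, Fin.sum_univ_two, c00, c01, c10, c11, d00, d01, d10, d11,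
      i00, i01, i10, i11, j00, j01, j10, j11,
      pE0, pE1, pF0, pF1, pG0, pG1, pEb0, pEb1, pFb0, pFb1, pGb0, pGb1]
    field_simp
    ring
  · simp only [pK2, Chr, Fin.sum_univ_two, c00, c01, c10, c11, d00, d01, d10, d11,
      i00, i01, i10, i11, j00, j01, j10, j11,
      pE0, pE1, pF0, pF1, pG0, pG1, pEb0, pEb1, pFb0, pFb1, pGb0, pGb1]
    field_simp
    ring
  · simp only [pK3, Chr, Fin.sum_univ_two, c00, c01, c10, c11, d00, d01, d10, d11,
      i00, i01, i10, i11, j00, j01, j10, j11,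
      pE0, pE1, pF0, pF1, pG0, pG1, pEb0, pEb1, pFb0, pFb1, pGb0, pGb1]
    field_simp
    ring
end
end

section
/- Let J ⊆ ℝ be an open interval with 0 ∉ J, let Y : J → ℝ be smooth, and let U = { (x,y) ∈ ℝ × J : Y(y) + x ≠ 0 }. Then the two metrics on U given by g: E = 0, F = Y(y)+x, G = 0 (i.e. ds²_g = 2(Y(y)+x) dx dy) and ḡ: Ē = 0, F̄ = −(Y(y)+x)/y³, Ḡ = (Y(y)+x)²/y⁴ (i.e. ds²_{ḡ} = −2(Y+x)/y³ dx dy + (Y+x)²/y⁴ dy²) have identical projective connection coefficients: K_i(g) = K_i(ḡ) on U for i = 0,1,2,3. Hence g and ḡ are projectively equivalent (have the same unparameterized geodesics). -/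
noncomputable section

lemma gc00 (E F G : ℝ × ℝ → ℝ) : gc E F G 0 0 = E := rfl
lemma gc01 (E F G : ℝ × ℝ → ℝ) : gc E F G 0 1 = F := rfl
lemma gc10 (E F G : ℝ × ℝ → ℝ) : gc E F G 1 0 = F := rfl
lemma gc11 (E F G : ℝ × ℝ → ℝ) : gc E F G 1 1 = G := rfl

lemma pd_of_hasFDerivAt' {f : ℝ × ℝ → ℝ} {L : ℝ × ℝ →L[ℝ] ℝ} {p : ℝ × ℝ}
    (h : HasFDerivAt f L p) (i : Fin 2) :
    pd i f p = L (if i = 0 then ((1:ℝ), (0:ℝ)) else ((0:ℝ), (1:ℝ))) := by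
  rw [pd, h.fderiv]


set_option maxHeartbeats 2000000 in
/-- The Jordan-block metric `g = 2(Y(y)+x)dxdy` and its canonical
projectively equivalent metric `ḡ = −2(Y+x)/y³ dxdy + (Y+x)²/y⁴ dy²` have identical
projective connection coefficients, hence are projectively equivalent. -/
theorem stmt15
    (J : Set ℝ) (hJopen : IsOpen J) (hJint : J.OrdConnected) (hJ0 : (0:ℝ) ∉ J)
    (Y : ℝ → ℝ) (hY : ContDiffOn ℝ (⊤ : ℕ∞) Y J)
    (U : Set (ℝ × ℝ)) (hU : U = {p : ℝ × ℝ | p.2 ∈ J ∧ Y p.2 + p.1 ≠ 0})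
    (E F G Eb Fb Gb : ℝ × ℝ → ℝ)
    (hE : ∀ p, E p = 0)
    (hF : ∀ p, F p = Y p.2 + p.1)
    (hG : ∀ p, G p = 0)
    (hEb : ∀ p, Eb p = 0)
    (hFb : ∀ p, Fb p = -(Y p.2 + p.1) / p.2 ^ 3)
    (hGb : ∀ p, Gb p = (Y p.2 + p.1) ^ 2 / p.2 ^ 4) :
    ∀ p ∈ U,
      pK0 E F G p = pK0 Eb Fb Gb p ∧
      pK1 E F G p = pK1 Eb Fb Gb p ∧
      pK2 E F G p = pK2 Eb Fb Gb p ∧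
      pK3 E F G p = pK3 Eb Fb Gb p := by
  obtain rfl : E = fun _ => 0 := funext hE
  obtain rfl : F = fun p => Y p.2 + p.1 := funext hF
  obtain rfl : G = fun _ => 0 := funext hG
  obtain rfl : Eb = fun _ => 0 := funext hEb
  obtain rfl : Fb = fun p => -(Y p.2 + p.1) / p.2 ^ 3 := funext hFb
  obtain rfl : Gb = fun p => (Y p.2 + p.1) ^ 2 / p.2 ^ 4 := funext hGb
  intro p hp
  rw [hU] at hp
  obtain ⟨hpJ, hfne⟩ := hp
  have hy : p.2 ≠ 0 := fun h => hJ0 (h ▸ hpJ)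
  have hdY : DifferentiableAt ℝ Y p.2 :=
    ((hY.contDiffAt (hJopen.mem_nhds hpJ)).differentiableAt (by simp))
  -- derivative facts
  have hf : HasFDerivAt (fun q : ℝ × ℝ => Y q.2 + q.1)
      (((fderiv ℝ Y p.2).comp (ContinuousLinearMap.snd ℝ ℝ ℝ)) + ContinuousLinearMap.fst ℝ ℝ ℝ) p :=
    ((hdY.hasFDerivAt).comp p hasFDerivAt_snd).add hasFDerivAt_fst
  have hinv : HasFDerivAt (fun q : ℝ × ℝ => q.2⁻¹)
      ((ContinuousLinearMap.smulRight (1 : ℝ →L[ℝ] ℝ) (-(p.2 ^ 2)⁻¹)).comp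
        (ContinuousLinearMap.snd ℝ ℝ ℝ)) p :=
    (hasDerivAt_inv hy).hasFDerivAt.comp p hasFDerivAt_snd
  have e1 : (fun q : ℝ × ℝ => -(Y q.2 + q.1) / q.2 ^ 3)
      = fun q => -(Y q.2 + q.1) * (q.2⁻¹ * (q.2⁻¹ * q.2⁻¹)) := by
    funext q; rw [div_eq_mul_inv, ← inv_pow]; ring
  have e2 : (fun q : ℝ × ℝ => (Y q.2 + q.1) ^ 2 / q.2 ^ 4)
      = fun q => ((Y q.2 + q.1) * (Y q.2 + q.1)) * (q.2⁻¹ * (q.2⁻¹ * (q.2⁻¹ * q.2⁻¹))) := by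
    funext q; rw [div_eq_mul_inv, ← inv_pow]; ring
  have hFb' : HasFDerivAt (fun q : ℝ × ℝ => -(Y q.2 + q.1) * (q.2⁻¹ * (q.2⁻¹ * q.2⁻¹))) _ p := (hf.neg).mul (hinv.mul (hinv.mul hinv))
  have hGb' : HasFDerivAt (fun q : ℝ × ℝ => ((Y q.2 + q.1) * (Y q.2 + q.1)) * (q.2⁻¹ * (q.2⁻¹ * (q.2⁻¹ * q.2⁻¹)))) _ p := (hf.mul hf).mul (hinv.mul (hinv.mul (hinv.mul hinv)))
  have pz : ∀ i : Fin 2, pd i (fun _ : ℝ × ℝ => (0:ℝ)) p = 0 := by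
    intro i; simp [pd]
  have pf0 : pd 0 (fun q : ℝ × ℝ => Y q.2 + q.1) p = 1 := by
    rw [pd_of_hasFDerivAt' hf]; simp
  have pf1 : pd 1 (fun q : ℝ × ℝ => Y q.2 + q.1) p = deriv Y p.2 := by
    rw [pd_of_hasFDerivAt' hf]; simp [fderiv_apply_one_eq_deriv]
  have pFb0 : pd 0 (fun q : ℝ × ℝ => -(Y q.2 + q.1) / q.2 ^ 3) p = -1 / p.2 ^ 3 := by
    rw [e1, pd_of_hasFDerivAt' hFb']; simp; field_simp
  have pFb1 : pd 1 (fun q : ℝ × ℝ => -(Y q.2 + q.1) / q.2 ^ 3) p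
      = -(deriv Y p.2) / p.2 ^ 3 + 3 * (Y p.2 + p.1) / p.2 ^ 4 := by
    rw [e1, pd_of_hasFDerivAt' hFb']; simp [fderiv_apply_one_eq_deriv]; field_simp; ring
  have pGb0 : pd 0 (fun q : ℝ × ℝ => (Y q.2 + q.1) ^ 2 / q.2 ^ 4) p
      = 2 * (Y p.2 + p.1) / p.2 ^ 4 := by
    rw [e2, pd_of_hasFDerivAt' hGb']; simp; field_simp; ring
  have pGb1 : pd 1 (fun q : ℝ × ℝ => (Y q.2 + q.1) ^ 2 / q.2 ^ 4) p
      = 2 * (Y p.2 + p.1) * deriv Y p.2 / p.2 ^ 4 - 4 * (Y p.2 + p.1) ^ 2 / p.2 ^ 5 := by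
    rw [e2, pd_of_hasFDerivAt' hGb']; simp [fderiv_apply_one_eq_deriv]; field_simp; ring
  refine ⟨?_, ?_, ?_, ?_⟩ <;>
    simp only [pK0, pK1, pK2, pK3, Chr, gInv, gc00, gc01, gc10, gc11, Fin.sum_univ_two,
      Fin.isValue, if_true, one_ne_zero, if_false, ite_true, ite_false, reduceIte,
      pz, pf0, pf1, pFb0, pFb1, pGb0, pGb1]
  all_goals
    generalize deriv Y p.2 = d
    revert hfne
    generalize Y p.2 + p.1 = a
    revert hy
    generalize p.2 = t
    intro ht ha
    field_simp
    try ring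
end
end

section
/- Let c ∈ ℝ \ {0} and let U be a nonempty connected open subset of { (x,y) ∈ ℝ² : x ≠ 0, y ≠ 0, x ≠ y }. Consider on U the metric g with components E = (1/x − 1/y)·c·e^{−3x}/x, F = 0, G = (1/x − 1/y)·e^{−3y}/y, and let K₀,…,K₃ be its projective connection coefficients. Then: (i) ∂_x K_i + ∂_y K_i = 0 on U for i = 0,1,2,3, i.e. the projective connection of g is invariant under the flow of v = ∂/∂x + ∂/∂y, so v is a projective vector field for g; and (ii) there is no constant λ ∈ ℝ such that ∂_x g_{ij} + ∂_y g_{ij} = λ·g_{ij} on U for all i,j ∈ {1,2}, i.e. v is not an infinitesimal homothety of g. -/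
noncomputable section

namespace Stmt18Aux

open Real ContinuousLinearMap

lemma pd0_eq' {f : ℝ×ℝ→ℝ} {f' : ℝ×ℝ →L[ℝ] ℝ} {p} (h : HasFDerivAt f f' p) :
    pd 0 f p = f' (1,0) := by simp [pd, h.fderiv]

lemma pd1_eq' {f : ℝ×ℝ→ℝ} {f' : ℝ×ℝ →L[ℝ] ℝ} {p} (h : HasFDerivAt f f' p) :
    pd 1 f p = f' (0,1) := by
  have h1 : (1 : Fin 2) ≠ 0 := by decide
  simp [pd, h.fderiv, h1]

lemma pd_zero (i : Fin 2) (p : ℝ×ℝ) : pd i (fun _ => (0:ℝ)) p = 0 := by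
  simp [pd]

lemma hw (c x : ℝ) (hx : x ≠ 0) :
    HasDerivAt (fun t => c * Real.exp (-3*t)/t)
      ((c * (Real.exp (-3*x) * -3) * x - c * Real.exp (-3*x))/x^2) x := by
  simpa [Pi.div_def] using ((((hasDerivAt_id' x).const_mul (-3:ℝ)).exp.const_mul c).div (hasDerivAt_id' x) hx)

lemma hw1 (x : ℝ) (hx : x ≠ 0) :
    HasDerivAt (fun t => Real.exp (-3*t)/t)
      (((Real.exp (-3*x) * -3) * x - Real.exp (-3*x))/x^2) x := by
  simpa [Pi.div_def] using ((((hasDerivAt_id' x).const_mul (-3:ℝ)).exp).div (hasDerivAt_id' x) hx)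

lemma hu (x : ℝ) (hx : x ≠ 0) :
    HasDerivAt (fun t : ℝ => 1/t) (-1/x^2) x := by
  simpa [Pi.div_def] using ((hasDerivAt_const x (1:ℝ)).div (hasDerivAt_id' x) hx)

lemma hEF (c : ℝ) (p : ℝ × ℝ) (hx : p.1 ≠ 0) (hy : p.2 ≠ 0) :
    HasFDerivAt (fun q : ℝ×ℝ => (1/q.1 - 1/q.2) * (c * Real.exp (-3*q.1)/q.1))
      ((1/p.1 - 1/p.2) • (((c * (Real.exp (-3*p.1) * -3) * p.1 - c * Real.exp (-3*p.1))/p.1^2) • (fst ℝ ℝ ℝ))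
       + (c * Real.exp (-3*p.1)/p.1) • (((-1/p.1^2) • (fst ℝ ℝ ℝ)) - ((-1/p.2^2) • (snd ℝ ℝ ℝ)))) p := by
  have h1 : HasFDerivAt (fun q : ℝ×ℝ => 1/q.1) ((-1/p.1^2) • (fst ℝ ℝ ℝ)) p :=
    (hu p.1 hx).comp_hasFDerivAt p (hasFDerivAt_fst)
  have h2 : HasFDerivAt (fun q : ℝ×ℝ => 1/q.2) ((-1/p.2^2) • (snd ℝ ℝ ℝ)) p :=
    (hu p.2 hy).comp_hasFDerivAt p (hasFDerivAt_snd)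
  have h3 : HasFDerivAt (fun q : ℝ×ℝ => c * Real.exp (-3*q.1)/q.1)
      (((c * (Real.exp (-3*p.1) * -3) * p.1 - c * Real.exp (-3*p.1))/p.1^2) • (fst ℝ ℝ ℝ)) p :=
    (hw c p.1 hx).comp_hasFDerivAt p (hasFDerivAt_fst)
  exact (h1.sub h2).mul h3

lemma hGF (p : ℝ × ℝ) (hx : p.1 ≠ 0) (hy : p.2 ≠ 0) :
    HasFDerivAt (fun q : ℝ×ℝ => (1/q.1 - 1/q.2) * (Real.exp (-3*q.2)/q.2))
      ((1/p.1 - 1/p.2) • ((((Real.exp (-3*p.2) * -3) * p.2 - Real.exp (-3*p.2))/p.2^2) • (snd ℝ ℝ ℝ))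
       + (Real.exp (-3*p.2)/p.2) • (((-1/p.1^2) • (fst ℝ ℝ ℝ)) - ((-1/p.2^2) • (snd ℝ ℝ ℝ)))) p := by
  have h1 : HasFDerivAt (fun q : ℝ×ℝ => 1/q.1) ((-1/p.1^2) • (fst ℝ ℝ ℝ)) p :=
    (hu p.1 hx).comp_hasFDerivAt p (hasFDerivAt_fst)
  have h2 : HasFDerivAt (fun q : ℝ×ℝ => 1/q.2) ((-1/p.2^2) • (snd ℝ ℝ ℝ)) p :=
    (hu p.2 hy).comp_hasFDerivAt p (hasFDerivAt_snd)
  have h3 : HasFDerivAt (fun q : ℝ×ℝ => Real.exp (-3*q.2)/q.2)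
      ((((Real.exp (-3*p.2) * -3) * p.2 - Real.exp (-3*p.2))/p.2^2) • (snd ℝ ℝ ℝ)) p :=
    (hw1 p.2 hy).comp_hasFDerivAt p (hasFDerivAt_snd)
  exact (h1.sub h2).mul h3

lemma pdE0 (c : ℝ) (p : ℝ × ℝ) (hx : p.1 ≠ 0) (hy : p.2 ≠ 0) :
    pd 0 (fun q : ℝ×ℝ => (1/q.1 - 1/q.2) * (c * Real.exp (-3*q.1)/q.1)) p =
      (c * Real.exp (-3*p.1)/p.1) * (-1/p.1^2)
      + (1/p.1 - 1/p.2) * ((c * (Real.exp (-3*p.1) * -3) * p.1 - c * Real.exp (-3*p.1))/p.1^2) := by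
  rw [pd0_eq' (hEF c p hx hy)]; simp; ring

lemma pdE1 (c : ℝ) (p : ℝ × ℝ) (hx : p.1 ≠ 0) (hy : p.2 ≠ 0) :
    pd 1 (fun q : ℝ×ℝ => (1/q.1 - 1/q.2) * (c * Real.exp (-3*q.1)/q.1)) p =
      (c * Real.exp (-3*p.1)/p.1) * (1/p.2^2) := by
  rw [pd1_eq' (hEF c p hx hy)]; simp; ring

lemma pdG0 (p : ℝ × ℝ) (hx : p.1 ≠ 0) (hy : p.2 ≠ 0) :
    pd 0 (fun q : ℝ×ℝ => (1/q.1 - 1/q.2) * (Real.exp (-3*q.2)/q.2)) p =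
      (Real.exp (-3*p.2)/p.2) * (-1/p.1^2) := by
  rw [pd0_eq' (hGF p hx hy)]; simp

lemma pdG1 (p : ℝ × ℝ) (hx : p.1 ≠ 0) (hy : p.2 ≠ 0) :
    pd 1 (fun q : ℝ×ℝ => (1/q.1 - 1/q.2) * (Real.exp (-3*q.2)/q.2)) p =
      (Real.exp (-3*p.2)/p.2) * (1/p.2^2)
      + (1/p.1 - 1/p.2) * (((Real.exp (-3*p.2) * -3) * p.2 - Real.exp (-3*p.2))/p.2^2) := by
  rw [pd1_eq' (hGF p hx hy)]; simp; ring

lemma gc00 (E F G : ℝ×ℝ→ℝ) : gc E F G 0 0 = E := rfl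
lemma gc01 (E F G : ℝ×ℝ→ℝ) : gc E F G 0 1 = F := rfl
lemma gc10 (E F G : ℝ×ℝ→ℝ) : gc E F G 1 0 = F := rfl
lemma gc11 (E F G : ℝ×ℝ→ℝ) : gc E F G 1 1 = G := rfl

lemma LK0 (c : ℝ) (hc : c ≠ 0) (q : ℝ × ℝ) (hx : q.1 ≠ 0) (hy : q.2 ≠ 0) (hxy : q.1 ≠ q.2) :
    pK0 (fun p : ℝ×ℝ => (1/p.1 - 1/p.2) * (c * Real.exp (-3*p.1)/p.1))
        (fun _ => (0:ℝ))
        (fun p : ℝ×ℝ => (1/p.1 - 1/p.2) * (Real.exp (-3*p.2)/p.2)) q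
      = c * Real.exp (3*(q.2-q.1)) / (2*(q.2-q.1)) := by
  unfold pK0 Chr
  rw [Fin.sum_univ_two]
  simp only [gc00, gc01, gc10, gc11]
  simp only [pdE0 c q hx hy, pdE1 c q hx hy, pdG0 q hx hy, pdG1 q hx hy, pd_zero]
  simp only [gInv]
  norm_num
  have hxy' : q.2 - q.1 ≠ 0 := sub_ne_zero.2 (Ne.symm hxy)
  have hh : q.1⁻¹ - q.2⁻¹ ≠ 0 := sub_ne_zero.2 (fun heq => hxy (inv_inj.mp heq))
  rw [show (3*(q.2-q.1)) = (-(3*q.1)) - (-(3*q.2)) by ring, Real.exp_sub]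
  field_simp

lemma LK1 (c : ℝ) (hc : c ≠ 0) (q : ℝ × ℝ) (hx : q.1 ≠ 0) (hy : q.2 ≠ 0) (hxy : q.1 ≠ q.2) :
    pK1 (fun p : ℝ×ℝ => (1/p.1 - 1/p.2) * (c * Real.exp (-3*p.1)/p.1))
        (fun _ => (0:ℝ))
        (fun p : ℝ×ℝ => (1/p.1 - 1/p.2) * (Real.exp (-3*p.2)/p.2)) q
      = 1/(2*(q.2-q.1)) - 3/2 := by
  unfold pK1 Chr
  rw [Fin.sum_univ_two, Fin.sum_univ_two]
  simp only [gc00, gc01, gc10, gc11]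
  simp only [pdE0 c q hx hy, pdE1 c q hx hy, pdG0 q hx hy, pdG1 q hx hy, pd_zero]
  simp only [gInv]
  norm_num
  have hxy' : q.2 - q.1 ≠ 0 := sub_ne_zero.2 (Ne.symm hxy)
  have hh : q.1⁻¹ - q.2⁻¹ ≠ 0 := sub_ne_zero.2 (fun heq => hxy (inv_inj.mp heq))
  field_simp
  ring

lemma LK2 (c : ℝ) (hc : c ≠ 0) (q : ℝ × ℝ) (hx : q.1 ≠ 0) (hy : q.2 ≠ 0) (hxy : q.1 ≠ q.2) :
    pK2 (fun p : ℝ×ℝ => (1/p.1 - 1/p.2) * (c * Real.exp (-3*p.1)/p.1))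
        (fun _ => (0:ℝ))
        (fun p : ℝ×ℝ => (1/p.1 - 1/p.2) * (Real.exp (-3*p.2)/p.2)) q
      = 1/(2*(q.2-q.1)) + 3/2 := by
  unfold pK2 Chr
  rw [Fin.sum_univ_two, Fin.sum_univ_two]
  simp only [gc00, gc01, gc10, gc11]
  simp only [pdE0 c q hx hy, pdE1 c q hx hy, pdG0 q hx hy, pdG1 q hx hy, pd_zero]
  simp only [gInv]
  norm_num
  have hxy' : q.2 - q.1 ≠ 0 := sub_ne_zero.2 (Ne.symm hxy)
  have hh : q.1⁻¹ - q.2⁻¹ ≠ 0 := sub_ne_zero.2 (fun heq => hxy (inv_inj.mp heq))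
  field_simp
  ring

lemma LK3 (c : ℝ) (hc : c ≠ 0) (q : ℝ × ℝ) (hx : q.1 ≠ 0) (hy : q.2 ≠ 0) (hxy : q.1 ≠ q.2) :
    pK3 (fun p : ℝ×ℝ => (1/p.1 - 1/p.2) * (c * Real.exp (-3*p.1)/p.1))
        (fun _ => (0:ℝ))
        (fun p : ℝ×ℝ => (1/p.1 - 1/p.2) * (Real.exp (-3*p.2)/p.2)) q
      = Real.exp (-3*(q.2-q.1)) / (2*c*(q.2-q.1)) := by
  unfold pK3 Chr
  rw [Fin.sum_univ_two]
  simp only [gc00, gc01, gc10, gc11]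
  simp only [pdE0 c q hx hy, pdE1 c q hx hy, pdG0 q hx hy, pdG1 q hx hy, pd_zero]
  simp only [gInv]
  norm_num
  have hxy' : q.2 - q.1 ≠ 0 := sub_ne_zero.2 (Ne.symm hxy)
  have hh : q.1⁻¹ - q.2⁻¹ ≠ 0 := sub_ne_zero.2 (fun heq => hxy (inv_inj.mp heq))
  rw [show (-(3*(q.2-q.1)) : ℝ) = (-(3*q.2)) - (-(3*q.1)) by ring, Real.exp_sub]
  field_simp

lemma key (φ : ℝ → ℝ) (K : ℝ×ℝ → ℝ) (p : ℝ×ℝ) (S : Set (ℝ×ℝ)) (hS : IsOpen S) (hp : p ∈ S)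
    (hagree : ∀ q ∈ S, K q = φ (q.2 - q.1)) (hφ : DifferentiableAt ℝ φ (p.2 - p.1)) :
    pd 0 K p + pd 1 K p = 0 := by
  have hsub : HasFDerivAt (fun q : ℝ×ℝ => q.2 - q.1) (snd ℝ ℝ ℝ - fst ℝ ℝ ℝ) p :=
    hasFDerivAt_snd.sub hasFDerivAt_fst
  have hcomp : HasFDerivAt (fun q : ℝ×ℝ => φ (q.2 - q.1))
      (deriv φ (p.2-p.1) • (snd ℝ ℝ ℝ - fst ℝ ℝ ℝ)) p :=
    (hφ.hasDerivAt).comp_hasFDerivAt p hsub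
  have heq : K =ᶠ[nhds p] fun q => φ (q.2 - q.1) := by
    filter_upwards [hS.mem_nhds hp] with q hq using hagree q hq
  have hfd : fderiv ℝ K p = fderiv ℝ (fun q => φ (q.2-q.1)) p := heq.fderiv_eq
  have h1 : (1 : Fin 2) ≠ 0 := by decide
  simp [pd, hfd, hcomp.fderiv, h1]

lemma Sopen : IsOpen {p : ℝ × ℝ | p.1 ≠ 0 ∧ p.2 ≠ 0 ∧ p.1 ≠ p.2} := by
  have h1 : IsOpen {p : ℝ × ℝ | p.1 ≠ 0} := isOpen_ne_fun continuous_fst continuous_const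
  have h2 : IsOpen {p : ℝ × ℝ | p.2 ≠ 0} := isOpen_ne_fun continuous_snd continuous_const
  have h3 : IsOpen {p : ℝ × ℝ | p.1 ≠ p.2} := isOpen_ne_fun continuous_fst continuous_snd
  exact (h1.inter (h2.inter h3))

lemma dphi0 (c t : ℝ) (ht : t ≠ 0) :
    DifferentiableAt ℝ (fun t => c * Real.exp (3*t) / (2*t)) t :=
  ((((hasDerivAt_id t).const_mul (3:ℝ)).exp.const_mul c).div
    ((hasDerivAt_id t).const_mul (2:ℝ)) (by simpa using ht)).differentiableAt

lemma dphi1 (t : ℝ) (ht : t ≠ 0) : DifferentiableAt ℝ (fun t => 1/(2*t) - 3/2) t :=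
  (((hasDerivAt_const t (1:ℝ)).div ((hasDerivAt_id t).const_mul (2:ℝ))
    (by simpa using ht)).sub_const _).differentiableAt

lemma dphi2 (t : ℝ) (ht : t ≠ 0) : DifferentiableAt ℝ (fun t => 1/(2*t) + 3/2) t :=
  (((hasDerivAt_const t (1:ℝ)).div ((hasDerivAt_id t).const_mul (2:ℝ))
    (by simpa using ht)).add_const _).differentiableAt

lemma dphi3 (c t : ℝ) (hc : c ≠ 0) (ht : t ≠ 0) :
    DifferentiableAt ℝ (fun t => Real.exp (-3*t) / (2*c*t)) t :=
  ((((hasDerivAt_id t).const_mul (-3:ℝ)).exp).div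
    ((hasDerivAt_id t).const_mul (2*c)) (by simp [hc, ht])).differentiableAt

end Stmt18Aux

/-- For the metric of case 1a, the vector field `v = ∂/∂x + ∂/∂y` is a
projective vector field (the projective connection coefficients are invariant under the
flow of `v`), but `v` is not an infinitesimal homothety. -/
theorem stmt18
    (c : ℝ) (hc : c ≠ 0)
    (U : Set (ℝ × ℝ)) (hUopen : IsOpen U) (hUconn : IsConnected U)
    (hUne : U.Nonempty)
    (hUsub : U ⊆ {p : ℝ × ℝ | p.1 ≠ 0 ∧ p.2 ≠ 0 ∧ p.1 ≠ p.2})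
    (E F G : ℝ × ℝ → ℝ)
    (hE : ∀ p, E p = (1 / p.1 - 1 / p.2) * (c * Real.exp (-3 * p.1) / p.1))
    (hF : ∀ p, F p = 0)
    (hG : ∀ p, G p = (1 / p.1 - 1 / p.2) * (Real.exp (-3 * p.2) / p.2)) :
    (∀ p ∈ U,
      pd 0 (pK0 E F G) p + pd 1 (pK0 E F G) p = 0 ∧
      pd 0 (pK1 E F G) p + pd 1 (pK1 E F G) p = 0 ∧
      pd 0 (pK2 E F G) p + pd 1 (pK2 E F G) p = 0 ∧
      pd 0 (pK3 E F G) p + pd 1 (pK3 E F G) p = 0) ∧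
    ¬ ∃ lam : ℝ, ∀ p ∈ U, ∀ i j : Fin 2,
        pd 0 (gc E F G i j) p + pd 1 (gc E F G i j) p = lam * gc E F G i j p := by
  have hEf : E = fun p : ℝ×ℝ => (1 / p.1 - 1 / p.2) * (c * Real.exp (-3 * p.1) / p.1) :=
    funext hE
  have hFf : F = fun _ : ℝ×ℝ => (0:ℝ) := funext hF
  have hGf : G = fun p : ℝ×ℝ => (1 / p.1 - 1 / p.2) * (Real.exp (-3 * p.2) / p.2) := funext hG
  subst hEf hFf hGf
  constructor
  · intro p hp
    obtain ⟨hx, hy, hxy⟩ := hUsub hp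
    have ht : p.2 - p.1 ≠ 0 := sub_ne_zero.2 (Ne.symm hxy)
    refine ⟨?_, ?_, ?_, ?_⟩
    · exact Stmt18Aux.key (fun t => c * Real.exp (3*t) / (2*t)) _ p _ Stmt18Aux.Sopen
        (hUsub hp) (fun q hq => Stmt18Aux.LK0 c hc q hq.1 hq.2.1 hq.2.2)
        (Stmt18Aux.dphi0 c _ ht)
    · exact Stmt18Aux.key (fun t => 1/(2*t) - 3/2) _ p _ Stmt18Aux.Sopen
        (hUsub hp) (fun q hq => Stmt18Aux.LK1 c hc q hq.1 hq.2.1 hq.2.2)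
        (Stmt18Aux.dphi1 _ ht)
    · exact Stmt18Aux.key (fun t => 1/(2*t) + 3/2) _ p _ Stmt18Aux.Sopen
        (hUsub hp) (fun q hq => Stmt18Aux.LK2 c hc q hq.1 hq.2.1 hq.2.2)
        (Stmt18Aux.dphi2 _ ht)
    · exact Stmt18Aux.key (fun t => Real.exp (-3*t) / (2*c*t)) _ p _ Stmt18Aux.Sopen
        (hUsub hp) (fun q hq => Stmt18Aux.LK3 c hc q hq.1 hq.2.1 hq.2.2)
        (Stmt18Aux.dphi3 c _ hc ht)
  · rintro ⟨lam, hlam⟩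
    obtain ⟨p, hp⟩ := hUne
    obtain ⟨hx, hy, hxy⟩ := hUsub hp
    have eq1 := hlam p hp 0 0
    have eq2 := hlam p hp 1 1
    simp only [Stmt18Aux.gc00, Stmt18Aux.gc11] at eq1 eq2
    rw [Stmt18Aux.pdE0 c p hx hy, Stmt18Aux.pdE1 c p hx hy] at eq1
    rw [Stmt18Aux.pdG0 p hx hy, Stmt18Aux.pdG1 p hx hy] at eq2
    have he1 := Real.exp_ne_zero (-3*p.1)
    have he2 := Real.exp_ne_zero (-3*p.2)
    field_simp at eq1 eq2
    have hM1 : (c * Real.exp (-(3*p.1)) * p.1^6 * p.2^2) ≠ 0 := by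
      have := Real.exp_ne_zero (-(3*p.1))
      positivity
    have hM2 : (Real.exp (-(3*p.2)) * p.1^2 * p.2^6) ≠ 0 := by
      have := Real.exp_ne_zero (-(3*p.2))
      positivity
    have hA : ((p.2 - p.1)*p.2*(-3*p.1-1) - p.2^2 + p.1^2) = lam * ((p.2-p.1)*(p.1*p.2)) := by
      apply mul_left_cancel₀ hM1
      linear_combination (c * Real.exp (-(3*p.1)) * p.1^6 * p.2^2) * eq1
    have hB : (-p.2^2 + (p.2 - p.1)*p.1*(-3*p.2-1) + p.1^2) = lam * ((p.2-p.1)*(p.1*p.2)) := by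
      apply mul_left_cancel₀ hM2
      linear_combination (Real.exp (-(3*p.2)) * p.1^2 * p.2^6) * eq2
    have hzero : (p.2 - p.1) * (p.1 - p.2) = 0 := by linear_combination hA - hB
    have ht : p.2 - p.1 ≠ 0 := sub_ne_zero.2 (Ne.symm hxy)
    have ht' : p.1 - p.2 ≠ 0 := sub_ne_zero.2 hxy
    exact (mul_ne_zero ht ht') hzero
end
end
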